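/- arXiv:2209.07579 — 5 statements merged into one kernel-verified Lean document; each statement's English description precedes it below -/
import Mathlib

section
/- Let 𝒢 and ℋ be DAGs on node set [p] such that c_ℋ = c_𝒢 + e_{S*} for some set S* ⊆ [p] with |S*| ≥ 2 (an addition). Then exactly one of the following holds: (i) S* = {i,j} for some i,j ∈ [p], every v-structure of ℋ is a v-structure of 𝒢 with the possible exception of v-structures of the form i → k ← j, and the skeletons of 𝒢 and ℋ differ exactly by the presence of the edge {i,j} (present in ℋ, absent in 𝒢); or (ii) S* = {i,j,k} for some i,j,k ∈ [p], 𝒢 and ℋ have the same skeleton, and their v-structures differ by exactly the single v-structure i → k ← j (present in ℋ, absent in 𝒢). In particular no addition has |S*| ≥ 4. -/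
open Classical

/-- A DAG on vertex type `V`: a directed graph (adjacency relation) with no directed cycles. -/
structure DAG (V : Type) where
  adj : V → V → Prop
  acyclic : ∀ v, ¬ Relation.TransGen adj v v

namespace DAG

variable {V : Type}

/-- The skeleton of a DAG: the undirected graph obtained by forgetting directions. -/
def skeleton (D : DAG V) : SimpleGraph V where
  Adj i j := D.adj i j ∨ D.adj j i
  symm := by constructor; intro i j h; exact h.symm
  loopless := by
    constructor
    intro i h
    rcases h with h | h <;> exact D.acyclic i (Relation.TransGen.single h)

/-- The characteristic imset of a DAG, as a vector indexed by finite vertex sets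
(coordinates on sets of size `< 2` are identically zero). -/
noncomputable def imset (D : DAG V) (S : Finset V) : ℝ :=
  if 2 ≤ S.card ∧ ∃ i ∈ S, ∀ j ∈ S, j ≠ i → D.adj j i then 1 else 0

/-- `D.IsVStructure i j k` means `i → j ← k` is an induced subgraph of `D`
(`i` and `k` non-adjacent). -/
def IsVStructure (D : DAG V) (i j k : V) : Prop :=
  i ≠ k ∧ D.adj i j ∧ D.adj k j ∧ ¬ D.adj i k ∧ ¬ D.adj k i

end DAG

/-- Two DAGs are Markov equivalent iff they have the same skeleton and the same
v-structures. -/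
def MarkovEquiv {V : Type} (D E : DAG V) : Prop :=
  D.skeleton = E.skeleton ∧ ∀ i j k, D.IsVStructure i j k ↔ E.IsVStructure i j k

/-- An arrow `i → j` of `D` is essential if it occurs in every DAG Markov equivalent to `D`. -/
def DAG.Essential {V : Type} (D : DAG V) (i j : V) : Prop :=
  D.adj i j ∧ ∀ E : DAG V, MarkovEquiv D E → E.adj i j

/-- The characteristic imset polytope of an undirected graph `G`: the convex hull of the
characteristic imsets of all DAGs with skeleton `G`. -/
noncomputable def CIM {V : Type} (G : SimpleGraph V) : Set (Finset V → ℝ) :=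
  convexHull ℝ { f | ∃ D : DAG V, D.skeleton = G ∧ f = D.imset }

/-- `conv(u,v)` is an edge (one-dimensional face) of `P`: there is a linear functional whose
maximum over `P` is attained exactly on the segment from `u` to `v`. -/
def IsPolytopeEdge {E : Type*} [AddCommGroup E] [Module ℝ E] (P : Set E) (u v : E) : Prop :=
  u ≠ v ∧ ∃ φ : E →ₗ[ℝ] ℝ, (∀ x ∈ P, φ x ≤ φ u) ∧ ∀ x ∈ P, (φ x = φ u ↔ x ∈ segment ℝ u v)

/-- `P` is a simplex of dimension `d`: the convex hull of `d+1` affinely independent points. -/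
def IsSimplexOfDim {E : Type*} [AddCommGroup E] [Module ℝ E] (P : Set E) (d : ℕ) : Prop :=
  ∃ pts : Fin (d + 1) → E, AffineIndependent ℝ pts ∧ P = convexHull ℝ (Set.range pts)

/-- The standard basis vector indexed by `S`. -/
noncomputable def eVec {V : Type} (S : Finset V) : Finset V → ℝ :=
  fun T => if T = S then 1 else 0

namespace DAG

variable {V : Type}

lemma adj_ne (D : DAG V) {a b : V} (h : D.adj a b) : a ≠ b := by
  rintro rfl; exact D.acyclic a (Relation.TransGen.single h)

lemma not_adj_of_adj (D : DAG V) {a b : V} (h : D.adj a b) : ¬ D.adj b a := by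
  intro h'
  exact D.acyclic a (Relation.TransGen.head h (Relation.TransGen.single h'))

lemma skel_adj_iff (D : DAG V) (a b : V) :
    D.skeleton.Adj a b ↔ (D.adj a b ∨ D.adj b a) := Iff.rfl

lemma imset_eq_one_iff (D : DAG V) (S : Finset V) :
    D.imset S = 1 ↔ (2 ≤ S.card ∧ ∃ i ∈ S, ∀ j ∈ S, j ≠ i → D.adj j i) := by
  unfold imset; split <;> simp_all

lemma imset_values (D : DAG V) (S : Finset V) : D.imset S = 0 ∨ D.imset S = 1 := by
  unfold imset; split <;> simp

lemma imset_pair_eq_one_iff [DecidableEq V] (D : DAG V) (a b : V) :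
    D.imset {a, b} = 1 ↔ D.skeleton.Adj a b := by
  rw [imset_eq_one_iff, skel_adj_iff]
  by_cases hab : a = b
  · subst hab
    constructor
    · rintro ⟨hc, -⟩; simp at hc
    · rintro (h | h) <;> exact absurd (D.adj_ne h) (by simp)
  · constructor
    · rintro ⟨-, i, hi, hpar⟩
      rcases (by simpa using hi : i = a ∨ i = b) with rfl | rfl
      · exact Or.inr (hpar b (by simp) (Ne.symm hab))
      · exact Or.inl (hpar a (by simp) hab)
    · rintro (h | h)
      · refine ⟨by rw [Finset.card_pair hab], b, by simp, ?_⟩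
        intro j hj hjb
        rcases (by simpa using hj : j = a ∨ j = b) with rfl | rfl
        · exact h
        · exact absurd rfl hjb
      · refine ⟨by rw [Finset.card_pair hab], a, by simp, ?_⟩
        intro j hj hja
        rcases (by simpa using hj : j = a ∨ j = b) with rfl | rfl
        · exact absurd rfl hja
        · exact h

lemma exists_sink (D : DAG V) : ∀ S : Finset V, S.Nonempty →
    ∃ w ∈ S, ∀ y ∈ S, ¬ Relation.TransGen D.adj w y := by
  intro S
  induction S using Finset.strongInductionOn with
  | _ S ih =>
    intro hS
    classical
    obtain ⟨a, ha⟩ := hS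
    by_cases h : ∀ y ∈ S, ¬ Relation.TransGen D.adj a y
    · exact ⟨a, ha, h⟩
    · push_neg at h
      obtain ⟨y0, hy0, hay0⟩ := h
      set S' := S.filter (fun b => Relation.TransGen D.adj a b) with hS'def
      have hsubset : S' ⊆ S := Finset.filter_subset _ _
      have hss : S' ⊂ S := by
        refine Finset.ssubset_iff_of_subset hsubset |>.2 ⟨a, ha, ?_⟩
        intro hmem
        exact D.acyclic a (Finset.mem_filter.1 hmem).2
      obtain ⟨w, hw, hwmax⟩ := ih S' hss ⟨y0, Finset.mem_filter.2 ⟨hy0, hay0⟩⟩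
      refine ⟨w, hsubset hw, ?_⟩
      intro y hy hwy
      have haw : Relation.TransGen D.adj a w := (Finset.mem_filter.1 hw).2
      have hay : Relation.TransGen D.adj a y := haw.trans hwy
      exact hwmax y (Finset.mem_filter.2 ⟨hy, hay⟩) hwy

lemma imset_of_isVStructure [DecidableEq V] (D : DAG V) {a b c : V} (h : D.IsVStructure a b c) :
    D.imset {a, b, c} = 1 := by
  obtain ⟨hac, hab, hcb, -, -⟩ := h
  have hab' := D.adj_ne hab
  have hcb' := D.adj_ne hcb
  rw [imset_eq_one_iff]
  refine ⟨?_, b, by simp, ?_⟩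
  · have hsub : ({a, b} : Finset V) ⊆ {a, b, c} := by
      intro x hx; simp at hx ⊢; tauto
    calc 2 = ({a, b} : Finset V).card := (Finset.card_pair hab').symm
      _ ≤ _ := Finset.card_le_card hsub
  · intro j hj hjb
    rcases (by simpa using hj : j = a ∨ j = b ∨ j = c) with rfl | rfl | rfl
    · exact hab
    · exact absurd rfl hjb
    · exact hcb

lemma isVStructure_of_imset [DecidableEq V] (D : DAG V) {a b c : V} (h1 : D.imset {a, b, c} = 1)
    (hab : a ≠ b) (hcb : c ≠ b) (hac : a ≠ c)
    (hnac : ¬ D.adj a c) (hnca : ¬ D.adj c a) : D.IsVStructure a b c := by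
  rw [imset_eq_one_iff] at h1
  obtain ⟨-, m, hm, hpar⟩ := h1
  rcases (by simpa using hm : m = a ∨ m = b ∨ m = c) with rfl | rfl | rfl
  · exact absurd (hpar c (by simp) (Ne.symm hac)) hnca
  · exact ⟨hac, hpar a (by simp) hab, hpar c (by simp) hcb, hnac, hnca⟩
  · exact absurd (hpar a (by simp) hac) hnac

lemma vstruct_transfer [DecidableEq V] {D E : DAG V} (hskel : D.skeleton = E.skeleton) {a b c : V}
    (him : D.imset {a, b, c} = E.imset {a, b, c}) (h : D.IsVStructure a b c) :
    E.IsVStructure a b c := by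
  have h1 : E.imset {a, b, c} = 1 := him ▸ D.imset_of_isVStructure h
  obtain ⟨hac, hDab, hDcb, hDnac, hDnca⟩ := h
  have hnE : ¬ E.skeleton.Adj a c := by
    rw [← hskel]; rintro (h' | h') <;> [exact hDnac h'; exact hDnca h']
  exact E.isVStructure_of_imset h1 (D.adj_ne hDab) (D.adj_ne hDcb) hac
    (fun h' => hnE (Or.inl h')) (fun h' => hnE (Or.inr h'))

lemma pair_eq_iff [DecidableEq V] {a b i j : V} (hij : i ≠ j) :
    ({a, b} : Finset V) = {i, j} ↔ (a = i ∧ b = j) ∨ (a = j ∧ b = i) := by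
  constructor
  · intro h
    have ha : a = i ∨ a = j := by
      have : a ∈ ({i, j} : Finset V) := h ▸ (by simp)
      simpa using this
    have hb : b = i ∨ b = j := by
      have : b ∈ ({i, j} : Finset V) := h ▸ (by simp)
      simpa using this
    have hi : i = a ∨ i = b := by
      have : i ∈ ({a, b} : Finset V) := h.symm ▸ (by simp)
      simpa using this
    have hj' : j = a ∨ j = b := by
      have : j ∈ ({a, b} : Finset V) := h.symm ▸ (by simp)
      simpa using this
    rcases ha with rfl | rfl <;> rcases hb with rfl | rfl <;> tauto
  · rintro (⟨rfl, rfl⟩ | ⟨rfl, rfl⟩)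
    · rfl
    · exact Finset.pair_comm a b

lemma triple_card [DecidableEq V] {a b c : V} (hab : a ≠ b) (hac : a ≠ c) (hbc : b ≠ c) :
    ({a, b, c} : Finset V).card = 3 := by
  rw [Finset.card_insert_of_notMem (by simp [hab, hac]), Finset.card_pair hbc]

end DAG

/-- **Addition characterization.**  If `c_ℋ = c_𝒢 + e_{S*}` with `|S*| ≥ 2`, then exactly one of:
(i) `S* = {i,j}`, every v-structure of `ℋ` is one of `𝒢` except possibly those of the form
`i → k ← j`, and the skeletons differ exactly by the edge `{i,j}` (present in `ℋ`, absent
in `𝒢`); (ii) `S* = {i,j,k}`, the skeletons agree, and the v-structures differ by exactly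
the single v-structure `i → k ← j` (present in `ℋ`, absent in `𝒢`).  In particular
`|S*| ≥ 4` is impossible. -/
theorem addition_characterization (p : ℕ) (D E : DAG (Fin p)) (Sstar : Finset (Fin p))
    (hcard : 2 ≤ Sstar.card) (hadd : E.imset = D.imset + eVec Sstar) :
    Xor'
      (∃ i j : Fin p, i ≠ j ∧ Sstar = {i, j} ∧
        (∀ a b c, E.IsVStructure a b c →
          D.IsVStructure a b c ∨ (a = i ∧ c = j) ∨ (a = j ∧ c = i)) ∧
        ¬ D.skeleton.Adj i j ∧
        (∀ a b, E.skeleton.Adj a b ↔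
          (D.skeleton.Adj a b ∨ (a = i ∧ b = j) ∨ (a = j ∧ b = i))))
      (∃ i j k : Fin p, Sstar = {i, j, k} ∧ D.skeleton = E.skeleton ∧
        E.IsVStructure i k j ∧ ¬ D.IsVStructure i k j ∧
        (∀ a b c, ¬ ((a = i ∧ b = k ∧ c = j) ∨ (a = j ∧ b = k ∧ c = i)) →
          (D.IsVStructure a b c ↔ E.IsVStructure a b c))) := by
  have hpoint : ∀ S, E.imset S = D.imset S + eVec Sstar S := fun S => congrFun hadd S
  have heq : ∀ S, S ≠ Sstar → E.imset S = D.imset S := by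
    intro S hS
    have := hpoint S
    simpa [eVec, hS] using this
  have hDE : E.imset Sstar = D.imset Sstar + 1 := by
    have := hpoint Sstar
    simpa [eVec] using this
  have hD0 : D.imset Sstar = 0 := by
    rcases D.imset_values Sstar with h | h
    · exact h
    · rcases E.imset_values Sstar with h' | h' <;> rw [h, h'] at hDE <;> norm_num at hDE
  have hE1 : E.imset Sstar = 1 := by rw [hDE, hD0]; norm_num
  -- witness for E at Sstar
  obtain ⟨-, x, hxS, hxpar⟩ := (E.imset_eq_one_iff Sstar).1 hE1
  -- no set of size ≥ 4
  have hcard3 : Sstar.card ≤ 3 := by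
    by_contra h4
    push_neg at h4
    obtain ⟨w, hwS, hwsink⟩ := D.exists_sink Sstar (Finset.card_pos.1 (by omega))
    have hwadj : ∀ y ∈ Sstar, ¬ D.adj w y :=
      fun y hy h => hwsink y hy (Relation.TransGen.single h)
    -- D has no witness at Sstar, so some y fails for w
    have hno : ¬ (2 ≤ Sstar.card ∧ ∃ i ∈ Sstar, ∀ j ∈ Sstar, j ≠ i → D.adj j i) := by
      intro h
      rw [← D.imset_eq_one_iff] at h
      rw [hD0] at h; norm_num at h
    push_neg at hno
    obtain ⟨y, hyS, hyw, hnyw⟩ := hno hcard w hwS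
    set T : Finset (Fin p) := {x, y, w} with hT
    have hTsub : T ⊆ Sstar := by
      intro t ht
      rcases (by simpa [hT] using ht : t = x ∨ t = y ∨ t = w) with rfl | rfl | rfl <;>
        assumption
    have hTcard2 : 2 ≤ T.card := by
      have hsub : ({y, w} : Finset (Fin p)) ⊆ T := by
        intro t ht; simp [hT] at ht ⊢; tauto
      calc 2 = ({y, w} : Finset (Fin p)).card := (Finset.card_pair hyw).symm
        _ ≤ _ := Finset.card_le_card hsub
    have hTcard3 : T.card ≤ 3 := by
      refine le_trans (Finset.card_insert_le _ _) ?_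
      have := Finset.card_insert_le y ({w} : Finset (Fin p))
      simp at this ⊢
      omega
    have hTne : T ≠ Sstar := by
      intro h; rw [h] at hTcard3; omega
    have hDT : D.imset T = 1 := by
      rw [← heq T hTne, E.imset_eq_one_iff]
      exact ⟨hTcard2, x, by simp [hT], fun j hj hjx => hxpar j (hTsub hj) hjx⟩
    obtain ⟨-, m, hm, hpar⟩ := (D.imset_eq_one_iff T).1 hDT
    have hmw : m = w := by
      by_contra hne
      exact hwadj m (hTsub hm) (hpar w (by simp [hT]) (fun h => hne h.symm))
    subst hmw
    exact hnyw (hpar y (by simp [hT]) hyw)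
  have hc23 : Sstar.card = 2 ∨ Sstar.card = 3 := by omega
  rcases hc23 with h2 | h3
  · -- |S*| = 2 : case (i)
    obtain ⟨i, j, hij, hS2⟩ := Finset.card_eq_two.1 h2
    refine Or.inl ⟨⟨i, j, hij, hS2, ?_, ?_, ?_⟩, ?_⟩
    · -- v-structure containment
      intro a b c hv
      by_cases hd : (a = i ∧ c = j) ∨ (a = j ∧ c = i)
      · exact Or.inr hd
      refine Or.inl ?_
      obtain ⟨hac, hEab, hEcb, hEnac, hEnca⟩ := hv
      have hab : a ≠ b := E.adj_ne hEab
      have hcb : c ≠ b := E.adj_ne hEcb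
      have hTne : ({a, b, c} : Finset (Fin p)) ≠ Sstar := by
        intro h
        have := DAG.triple_card hab hac (Ne.symm hcb)
        rw [h, h2] at this; omega
      have hDT : D.imset {a, b, c} = 1 := by
        rw [← heq _ hTne]
        exact E.imset_of_isVStructure ⟨hac, hEab, hEcb, hEnac, hEnca⟩
      have hpne : ({a, c} : Finset (Fin p)) ≠ Sstar := by
        rw [hS2]
        intro h
        exact hd ((DAG.pair_eq_iff hij).1 h)
      have hE0 : E.imset {a, c} = 0 := by
        rcases E.imset_values {a, c} with h | h
        · exact h
        · have := (E.imset_pair_eq_one_iff a c).1 h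
          rcases this with h' | h'
          · exact absurd h' hEnac
          · exact absurd h' hEnca
      have hD0' : D.imset {a, c} = 0 := by rw [← heq _ hpne]; exact hE0
      have hDnsk : ¬ D.skeleton.Adj a c := by
        intro h
        rw [← D.imset_pair_eq_one_iff, hD0'] at h
        norm_num at h
      exact D.isVStructure_of_imset hDT hab hcb hac
        (fun h => hDnsk (Or.inl h)) (fun h => hDnsk (Or.inr h))
    · -- ¬ D.skeleton.Adj i j
      intro h
      rw [← D.imset_pair_eq_one_iff, ← hS2, hD0] at h
      norm_num at h
    · -- skeleton difference
      intro a b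
      by_cases hp : ({a, b} : Finset (Fin p)) = Sstar
      · have hd := (DAG.pair_eq_iff hij).1 (hS2 ▸ hp)
        have hEadj : E.skeleton.Adj a b := by
          rw [← E.imset_pair_eq_one_iff, hp]; exact hE1
        exact iff_of_true hEadj (Or.inr hd)
      · have him : E.imset {a, b} = D.imset {a, b} := heq _ hp
        constructor
        · intro h
          refine Or.inl ?_
          rw [← D.imset_pair_eq_one_iff, ← him, E.imset_pair_eq_one_iff]
          exact h
        · rintro (h | hd)
          · rw [← E.imset_pair_eq_one_iff, him, D.imset_pair_eq_one_iff]
            exact h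
          · exfalso
            apply hp
            rw [hS2]
            exact (DAG.pair_eq_iff hij).2 hd
    · -- ¬ (ii)
      rintro ⟨i', j', k', hS3, -, hEv, -, -⟩
      obtain ⟨hij', hEik, hEjk, -, -⟩ := hEv
      have h1 : i' ≠ k' := E.adj_ne hEik
      have h2' : j' ≠ k' := E.adj_ne hEjk
      have := DAG.triple_card hij' h1 h2'
      rw [← hS3, h2] at this
      omega
  · -- |S*| = 3 : case (ii)
    obtain ⟨a, b, c, hab, hac, hbc, hS3⟩ := Finset.card_eq_three.1 h3
    have hxmem : x = a ∨ x = b ∨ x = c := by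
      have : x ∈ ({a, b, c} : Finset (Fin p)) := hS3 ▸ hxS
      simpa using this
    have hyz : ∃ y z : Fin p, x ≠ y ∧ x ≠ z ∧ y ≠ z ∧ Sstar = {x, y, z} := by
      rcases hxmem with rfl | rfl | rfl
      · exact ⟨b, c, hab, hac, hbc, hS3⟩
      · refine ⟨a, c, Ne.symm hab, hbc, hac, ?_⟩
        rw [hS3]; exact Finset.insert_comm a x {c}
      · refine ⟨a, b, Ne.symm hac, Ne.symm hbc, hab, ?_⟩
        rw [hS3, Finset.pair_comm b x, Finset.insert_comm a x]
    obtain ⟨y, z, hxy, hxz, hyzne, hSxyz⟩ := hyz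
    have hyS : y ∈ Sstar := by rw [hSxyz]; simp
    have hzS : z ∈ Sstar := by rw [hSxyz]; simp
    have hypar : E.adj y x := hxpar y hyS (Ne.symm hxy)
    have hzpar : E.adj z x := hxpar z hzS (Ne.symm hxz)
    -- skeletons agree
    have hskel : D.skeleton = E.skeleton := by
      ext u v
      have hne : ({u, v} : Finset (Fin p)) ≠ Sstar := by
        intro h
        have h1 : ({u, v} : Finset (Fin p)).card ≤ 2 := Finset.card_insert_le u {v} |>.trans (by simp)
        rw [h, h3] at h1; omega
      rw [← D.imset_pair_eq_one_iff, ← E.imset_pair_eq_one_iff, heq _ hne]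
    -- y and z are non-adjacent in E
    have hnadjyz : ¬ E.skeleton.Adj y z := by
      intro hadjyz
      obtain ⟨w, hwS, hwsink⟩ := D.exists_sink Sstar ⟨x, hxS⟩
      have hwadj : ∀ u ∈ Sstar, ¬ D.adj w u :=
        fun u hu h => hwsink u hu (Relation.TransGen.single h)
      have hyxD : D.adj y x ∨ D.adj x y := by
        have h' : E.skeleton.Adj y x := Or.inl hypar
        rw [← hskel] at h'; exact h'
      have hzxD : D.adj z x ∨ D.adj x z := by
        have h' : E.skeleton.Adj z x := Or.inl hzpar
        rw [← hskel] at h'; exact h'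
      have hyzD : D.adj y z ∨ D.adj z y := by
        rw [← hskel] at hadjyz; exact hadjyz
      have hall : ∀ u ∈ Sstar, ∀ v ∈ Sstar, u ≠ v → D.adj u v ∨ D.adj v u := by
        intro u hu v hv huv
        have hu' : u = x ∨ u = y ∨ u = z := by
          have : u ∈ ({x, y, z} : Finset (Fin p)) := hSxyz ▸ hu
          simpa using this
        have hv' : v = x ∨ v = y ∨ v = z := by
          have : v ∈ ({x, y, z} : Finset (Fin p)) := hSxyz ▸ hv
          simpa using this
        rcases hu' with rfl | rfl | rfl <;> rcases hv' with rfl | rfl | rfl <;> tauto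
      have : D.imset Sstar = 1 := by
        rw [D.imset_eq_one_iff]
        refine ⟨hcard, w, hwS, ?_⟩
        intro u hu huw
        rcases hall u hu w hwS huw with h | h
        · exact h
        · exact absurd h (hwadj u hu)
      rw [hD0] at this; norm_num at this
    have hEnyz : ¬ E.adj y z := fun h => hnadjyz (Or.inl h)
    have hEnzy : ¬ E.adj z y := fun h => hnadjyz (Or.inr h)
    have hEv : E.IsVStructure y x z := ⟨hyzne, hypar, hzpar, hEnyz, hEnzy⟩
    have hTeq : ({y, x, z} : Finset (Fin p)) = Sstar := by
      rw [hSxyz]; exact Finset.insert_comm y x {z}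
    have hnDv : ¬ D.IsVStructure y x z := by
      intro h
      have := D.imset_of_isVStructure h
      rw [hTeq, hD0] at this; norm_num at this
    refine Or.inr ⟨⟨y, z, x, by rw [hSxyz, Finset.insert_comm x y, Finset.pair_comm x z], hskel, hEv, hnDv, ?_⟩, ?_⟩
    · -- uniqueness of the changed v-structure
      intro a' b' c' hn
      by_cases hT : ({a', b', c'} : Finset (Fin p)) = Sstar
      · constructor
        · intro hDv
          exfalso
          have := D.imset_of_isVStructure hDv
          rw [hT, hD0] at this; norm_num at this
        · intro hEv'
          exfalso
          obtain ⟨hac', hEab', hEcb', hEnac', hEnca'⟩ := hEv'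
          have hnxy : ¬ E.adj x y := E.not_adj_of_adj hypar
          have hnxz : ¬ E.adj x z := E.not_adj_of_adj hzpar
          have hab'' : a' ≠ b' := E.adj_ne hEab'
          have hcb'' : c' ≠ b' := E.adj_ne hEcb'
          have hmem : ∀ t ∈ ({a', b', c'} : Finset (Fin p)), t = x ∨ t = y ∨ t = z := by
            intro t ht
            have : t ∈ ({x, y, z} : Finset (Fin p)) := by
              rw [← hSxyz, ← hT]; exact ht
            simpa using this
          have ha'm := hmem a' (by simp)
          have hb'm := hmem b' (by simp)
          have hc'm := hmem c' (by simp)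
          rcases hb'm with hb | hb | hb
          · rcases ha'm with ha | ha | ha
            · exact hab'' (ha.trans hb.symm)
            · rcases hc'm with hc | hc | hc
              · exact hcb'' (hc.trans hb.symm)
              · exact hac' (ha.trans hc.symm)
              · exact hn (Or.inl ⟨ha, hb, hc⟩)
            · rcases hc'm with hc | hc | hc
              · exact hcb'' (hc.trans hb.symm)
              · exact hn (Or.inr ⟨ha, hb, hc⟩)
              · exact hac' (ha.trans hc.symm)
          · rcases ha'm with ha | ha | ha
            · rw [ha, hb] at hEab'; exact hnxy hEab'
            · exact hab'' (ha.trans hb.symm)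
            · rw [ha, hb] at hEab'; exact hEnzy hEab'
          · rcases ha'm with ha | ha | ha
            · rw [ha, hb] at hEab'; exact hnxz hEab'
            · rw [ha, hb] at hEab'; exact hEnyz hEab'
            · exact hab'' (ha.trans hb.symm)
      · constructor
        · exact DAG.vstruct_transfer hskel (heq _ hT).symm
        · exact DAG.vstruct_transfer hskel.symm (heq _ hT)
    · -- ¬ (i)
      rintro ⟨i', j', hij', hS2, -, -, -⟩
      have := Finset.card_pair hij'
      rw [← hS2, h3] at this
      omega
end

section
/- Let G' = ([p−1], E') be a vertex-disjoint union of complete graphs K_{p_1}, …, K_{p_m} (so Σ_{s∈[m]} p_s = p−1), and let G = ([p], E) be the graph on [p] in which node p is adjacent to every node of [p−1] and the induced subgraph on [p−1] equals G'. Then CIM_G is a simplex of dimension d = 2^{p−1} − 1 − Σ_{s∈[m]} (2^{p_s} − 1). -/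
open Classical

/-- The graph `G` on `Option (Fin n)`: node `none` (the extra node `p`) is adjacent to every
other node, and the induced graph on `Fin n` (the nodes `[p-1]`) is the vertex disjoint union
of complete graphs given by the block assignment `blk`. -/
def starCliqueGraph (n m : ℕ) (blk : Fin n → Fin m) : SimpleGraph (Option (Fin n)) where
  Adj i j := i ≠ j ∧
    (i = none ∨ j = none ∨ ∃ a b : Fin n, i = some a ∧ j = some b ∧ blk a = blk b)
  symm := by
    constructor
    rintro i j ⟨hne, h⟩
    refine ⟨hne.symm, ?_⟩
    rcases h with h | h | ⟨a, b, ha, hb, hab⟩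
    · exact Or.inr (Or.inl h)
    · exact Or.inl h
    · exact Or.inr (Or.inr ⟨b, a, hb, ha, hab.symm⟩)
  loopless := by constructor; rintro i ⟨h, -⟩; exact h rfl

lemma exists_sink {V : Type} (D : DAG V) :
    ∀ (S : Finset V), S.Nonempty →
      (∀ i ∈ S, ∀ j ∈ S, i ≠ j → D.adj i j ∨ D.adj j i) →
      ∃ i ∈ S, ∀ j ∈ S, j ≠ i → D.adj j i := by
  intro S
  induction S using Finset.cons_induction with
  | empty => rintro ⟨x, hx⟩; simp at hx
  | cons a S ha ih =>
    intro _ htour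
    rcases S.eq_empty_or_nonempty with rfl | hS'
    · exact ⟨a, by simp, by simp⟩
    obtain ⟨i, hiS, hi⟩ := ih hS'
      (fun x hx y hy => htour x (Finset.mem_cons_of_mem hx) y (Finset.mem_cons_of_mem hy))
    have hai : a ≠ i := fun h => ha (h ▸ hiS)
    rcases htour a (Finset.mem_cons_self a S) i (Finset.mem_cons_of_mem hiS) hai with h1 | h2
    · refine ⟨i, Finset.mem_cons_of_mem hiS, ?_⟩
      intro j hj hji
      rcases Finset.mem_cons.mp hj with rfl | hjS
      · exact h1
      · exact hi j hjS hji
    · refine ⟨a, Finset.mem_cons_self a S, ?_⟩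
      intro j hj hja
      rcases Finset.mem_cons.mp hj with rfl | hjS
      · exact absurd rfl hja
      by_cases hji : j = i
      · exact hji ▸ h2
      rcases htour j (Finset.mem_cons_of_mem hjS) a (Finset.mem_cons_self a S)
          (fun h => ha (h ▸ hjS)) with h3 | h4
      · exact h3
      · exact absurd (Relation.TransGen.head h4 (Relation.TransGen.head (hi j hjS hji)
          (Relation.TransGen.single h2))) (D.acyclic a)

section CIMAux

variable {n m : ℕ}

def OneBlk (blk : Fin n → Fin m) (T : Finset (Fin n)) : Prop :=
  ∀ a ∈ T, ∀ b ∈ T, blk a = blk b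

def TSet (S : Finset (Option (Fin n))) : Finset (Fin n) :=
  Finset.univ.filter (fun a => some a ∈ S)

lemma mem_TSet {S : Finset (Option (Fin n))} {a : Fin n} : a ∈ TSet S ↔ some a ∈ S := by
  simp [TSet]

noncomputable def fP (blk : Fin n → Fin m) (P : Finset (Fin n)) :
    Finset (Option (Fin n)) → ℝ :=
  fun S => if 2 ≤ S.card ∧ (OneBlk blk (TSet S) ∨ (none ∈ S ∧ TSet S ⊆ P)) then 1 else 0

end CIMAux
section CIMAux
variable {n m : ℕ}

lemma imset_eq_fP (blk : Fin n → Fin m) (D : DAG (Option (Fin n)))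
    (hskel : D.skeleton = starCliqueGraph n m blk) :
    D.imset = fP blk (Finset.univ.filter (fun a => D.adj (some a) none)) := by
  have hGadj : ∀ i j, D.adj i j → (starCliqueGraph n m blk).Adj i j := by
    intro i j h
    rw [← hskel]; exact Or.inl h
  have hback : ∀ i j, (starCliqueGraph n m blk).Adj i j → D.adj i j ∨ D.adj j i := by
    intro i j h
    rw [← hskel] at h; exact h
  funext S
  have hiff : (2 ≤ S.card ∧ ∃ i ∈ S, ∀ j ∈ S, j ≠ i → D.adj j i) ↔
      (2 ≤ S.card ∧ (OneBlk blk (TSet S) ∨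
        (none ∈ S ∧ TSet S ⊆ Finset.univ.filter (fun a => D.adj (some a) none)))) := by
    refine and_congr_right fun hc => ?_
    constructor
    · rintro ⟨i, hiS, hi⟩
      match i with
      | none =>
        refine Or.inr ⟨hiS, fun a haT => ?_⟩
        simp only [Finset.mem_filter, Finset.mem_univ, true_and]
        exact hi (some a) (mem_TSet.mp haT) (by simp)
      | some a =>
        refine Or.inl ?_
        have hkey : ∀ x ∈ TSet S, blk x = blk a := by
          intro x hx
          by_cases hxa : x = a
          · rw [hxa]
          have hadj := hi (some x) (mem_TSet.mp hx) (by simpa using hxa)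
          obtain ⟨-, h⟩ := hGadj _ _ hadj
          rcases h with h | h | ⟨u, v, hu, hv, huv⟩
          · exact absurd h (by simp)
          · exact absurd h (by simp)
          · obtain rfl : x = u := by simpa using hu
            obtain rfl : a = v := by simpa using hv
            exact huv
        intro b hb c hcT
        rw [hkey b hb, hkey c hcT]
    · rintro (hOB | ⟨hnS, hTP⟩)
      · apply exists_sink D S (Finset.card_pos.mp (by omega))
        intro i hiS j hjS hij
        apply hback
        refine ⟨hij, ?_⟩
        match i, j with
        | none, _ => exact Or.inl rfl
        | some a, none => exact Or.inr (Or.inl rfl)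
        | some a, some b =>
          exact Or.inr (Or.inr ⟨a, b, rfl, rfl,
            hOB a (mem_TSet.mpr hiS) b (mem_TSet.mpr hjS)⟩)
      · refine ⟨none, hnS, fun j hjS hj => ?_⟩
        match j with
        | none => exact absurd rfl hj
        | some a =>
          have := hTP (mem_TSet.mpr hjS)
          simpa using (Finset.mem_filter.mp this).2
  unfold DAG.imset fP
  by_cases h : (2 ≤ S.card ∧ ∃ i ∈ S, ∀ j ∈ S, j ≠ i → D.adj j i)
  · rw [if_pos h, if_pos (hiff.mp h)]
  · rw [if_neg h, if_neg (fun hc => h (hiff.mpr hc))]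

lemma fP_eq_empty (blk : Fin n → Fin m) {P : Finset (Fin n)} (hP : OneBlk blk P) :
    fP blk P = fP blk ∅ := by
  funext S
  unfold fP
  have hiff : (2 ≤ S.card ∧ (OneBlk blk (TSet S) ∨ (none ∈ S ∧ TSet S ⊆ P))) ↔
      (2 ≤ S.card ∧ (OneBlk blk (TSet S) ∨ (none ∈ S ∧ TSet S ⊆ ∅))) := by
    refine and_congr_right fun _ => ?_
    constructor
    · rintro (h | ⟨-, hTP⟩)
      · exact Or.inl h
      · exact Or.inl (fun a ha b hb => hP a (hTP ha) b (hTP hb))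
    · rintro (h | ⟨-, hT0⟩)
      · exact Or.inl h
      · exact Or.inl (fun a ha => absurd (hT0 ha) (by simp))
  by_cases h : (2 ≤ S.card ∧ (OneBlk blk (TSet S) ∨ (none ∈ S ∧ TSet S ⊆ P)))
  · rw [if_pos h, if_pos (hiff.mp h)]
  · rw [if_neg h, if_neg (fun hc => h (hiff.mpr hc))]

def keyFn (P : Finset (Fin n)) : Option (Fin n) → ℕ
  | none => n
  | some a => if a ∈ P then a.val else n + 1 + a.val

lemma keyFn_inj (P : Finset (Fin n)) : Function.Injective (keyFn P) := by
  intro i j h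
  match i, j with
  | none, none => rfl
  | none, some b =>
    exfalso
    have hb := b.isLt
    simp only [keyFn] at h
    split at h <;> omega
  | some a, none =>
    exfalso
    have ha := a.isLt
    simp only [keyFn] at h
    split at h <;> omega
  | some a, some b =>
    have ha := a.isLt
    have hb := b.isLt
    simp only [keyFn] at h
    have : a.val = b.val := by split at h <;> split at h <;> omega
    exact congrArg some (Fin.ext this)

def DP (blk : Fin n → Fin m) (P : Finset (Fin n)) : DAG (Option (Fin n)) where
  adj i j := (starCliqueGraph n m blk).Adj i j ∧ keyFn P i < keyFn P j
  acyclic := by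
    intro v hv
    have h := Relation.TransGen.mono (p := fun a b => keyFn P a < keyFn P b) (fun i j h => h.2) v v hv
    rw [@Relation.transGen_eq_self _ (fun a b => keyFn P a < keyFn P b)
      ⟨fun a b c (hab : keyFn P a < keyFn P b) hbc => lt_trans hab hbc⟩] at h
    exact lt_irrefl _ h

lemma skeleton_DP (blk : Fin n → Fin m) (P : Finset (Fin n)) :
    (DP blk P).skeleton = starCliqueGraph n m blk := by
  ext i j
  show ((starCliqueGraph n m blk).Adj i j ∧ _) ∨ ((starCliqueGraph n m blk).Adj j i ∧ _) ↔ _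
  constructor
  · rintro (⟨h, -⟩ | ⟨h, -⟩)
    · exact h
    · exact (starCliqueGraph n m blk).adj_symm h
  · intro h
    have hne : keyFn P i ≠ keyFn P j := fun he => h.1 (keyFn_inj P he)
    rcases lt_or_gt_of_ne hne with hlt | hgt
    · exact Or.inl ⟨h, hlt⟩
    · exact Or.inr ⟨(starCliqueGraph n m blk).adj_symm h, hgt⟩

lemma pa_DP (blk : Fin n → Fin m) (P : Finset (Fin n)) :
    Finset.univ.filter (fun a => (DP blk P).adj (some a) none) = P := by
  ext a
  simp only [Finset.mem_filter, Finset.mem_univ, true_and]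
  constructor
  · rintro ⟨-, hlt⟩
    by_contra haP
    simp only [keyFn, if_neg haP] at hlt
    omega
  · intro haP
    refine ⟨⟨by simp, Or.inr (Or.inl rfl)⟩, ?_⟩
    simp only [keyFn, if_pos haP]
    exact a.isLt

lemma card_I (blk : Fin n → Fin m) :
    Fintype.card {P : Finset (Fin n) // P = ∅ ∨ ¬ OneBlk blk P} +
      ∑ s : Fin m, (2 ^ ((Finset.univ.filter (fun a => blk a = s)).card) - 1) = 2 ^ n := by
  classical
  rw [Fintype.card_subtype]
  have hneg : Finset.univ.filter (fun P : Finset (Fin n) => ¬ (P = ∅ ∨ ¬ OneBlk blk P)) =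
      Finset.univ.biUnion
        (fun s : Fin m => ((Finset.univ.filter (fun a => blk a = s)).powerset).erase ∅) := by
    ext P
    simp only [Finset.mem_filter, Finset.mem_univ, true_and, not_or, not_not,
      Finset.mem_biUnion, Finset.mem_erase, Finset.mem_powerset]
    constructor
    · rintro ⟨hPne, hOB⟩
      obtain ⟨a, ha⟩ := Finset.nonempty_iff_ne_empty.mpr hPne
      refine ⟨blk a, hPne, fun b hb => ?_⟩
      simp only [Finset.mem_filter, Finset.mem_univ, true_and]
      exact hOB b hb a ha
    · rintro ⟨s, hPne, hPs⟩
      refine ⟨hPne, fun a ha b hb => ?_⟩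
      have h1 := (Finset.mem_filter.mp (hPs ha)).2
      have h2 := (Finset.mem_filter.mp (hPs hb)).2
      rw [h1, h2]
  have hcard2 : (Finset.univ.filter
      (fun P : Finset (Fin n) => ¬ (P = ∅ ∨ ¬ OneBlk blk P))).card =
      ∑ s : Fin m, (2 ^ ((Finset.univ.filter (fun a => blk a = s)).card) - 1) := by
    rw [hneg, Finset.card_biUnion]
    · refine Finset.sum_congr rfl fun s _ => ?_
      rw [Finset.card_erase_of_mem (Finset.empty_mem_powerset _), Finset.card_powerset]
    · intro s _ t _ hst
      rw [Function.onFun, Finset.disjoint_left]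
      intro P hPs hPt
      simp only [Finset.mem_erase, Finset.mem_powerset] at hPs hPt
      obtain ⟨a, ha⟩ := Finset.nonempty_iff_ne_empty.mpr hPs.1
      have h1 := (Finset.mem_filter.mp (hPs.2 ha)).2
      have h2 := (Finset.mem_filter.mp (hPt.2 ha)).2
      exact hst (h1 ▸ h2 ▸ rfl)
  rw [← hcard2]
  rw [Finset.card_filter_add_card_filter_not]
  rw [Finset.card_univ, Fintype.card_finset, Fintype.card_fin]

lemma wzero (blk : Fin n → Fin m)
    (W : {P : Finset (Fin n) // P = ∅ ∨ ¬ OneBlk blk P} → ℝ)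
    (hsum : ∑ Q, W Q = 0)
    (hcomb : ∑ Q, W Q • fP blk Q.1 = 0) :
    ∀ Q, W Q = 0 := by
  classical
  have claim : ∀ T : Finset (Fin n), ¬ OneBlk blk T →
      ∑ Q : {P : Finset (Fin n) // P = ∅ ∨ ¬ OneBlk blk P}, (if T ⊆ Q.1 then W Q else 0) = 0 := by
    intro T hT
    set S : Finset (Option (Fin n)) := insert none (T.image some) with hSdef
    have hTS : TSet S = T := by
      ext a
      simp [TSet, hSdef]
    have hTne : T.Nonempty := by
      rcases T.eq_empty_or_nonempty with rfl | h
      · exact absurd (fun a ha => absurd ha (by simp)) hT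
      · exact h
    have hcard : 2 ≤ S.card := by
      rw [hSdef, Finset.card_insert_of_notMem (by simp),
        Finset.card_image_of_injective _ (Option.some_injective _)]
      have := Finset.card_pos.mpr hTne
      omega
    have hval : ∀ Q : Finset (Fin n), fP blk Q S = if T ⊆ Q then 1 else 0 := by
      intro Q
      unfold fP
      rw [hTS]
      by_cases hQ : T ⊆ Q
      · rw [if_pos ⟨hcard, Or.inr ⟨Finset.mem_insert_self _ _, hQ⟩⟩, if_pos hQ]
      · rw [if_neg, if_neg hQ]
        rintro ⟨-, (h | ⟨-, h⟩)⟩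
        · exact hT h
        · exact hQ h
    have h0 := congrFun hcomb S
    rw [Finset.sum_apply] at h0
    simp only [Pi.smul_apply, smul_eq_mul, hval, mul_ite, mul_one, mul_zero,
      Pi.zero_apply] at h0
    exact h0
  have step : ∀ Q : {P : Finset (Fin n) // P = ∅ ∨ ¬ OneBlk blk P}, ¬ OneBlk blk Q.1 →
      (∀ Q' : {P : Finset (Fin n) // P = ∅ ∨ ¬ OneBlk blk P}, Q' ≠ Q → Q.1 ⊆ Q'.1 → W Q' = 0) → W Q = 0 := by
    intro Q hQ hrest
    have h := claim Q.1 hQ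
    rw [Finset.sum_eq_single Q] at h
    · simpa using h
    · intro Q' _ hne
      by_cases hss : Q.1 ⊆ Q'.1
      · simp [hss, hrest Q' hne hss]
      · simp [hss]
    · intro h'; exact absurd (Finset.mem_univ Q) h'
  have key : ∀ k : ℕ, ∀ Q : {P : Finset (Fin n) // P = ∅ ∨ ¬ OneBlk blk P}, ¬ OneBlk blk Q.1 → n - Q.1.card ≤ k → W Q = 0 := by
    intro k
    induction k with
    | zero =>
      intro Q hQ hk
      refine step Q hQ fun Q' hne hss => ?_
      exfalso
      have hc1 : Q.1.card ≤ n := by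
        have := Finset.card_le_card (Finset.subset_univ Q.1)
        simpa using this
      have hQu : Q.1 = Finset.univ := by
        apply Finset.eq_univ_of_card
        simp only [Finset.card_univ, Fintype.card_fin]
        omega
      have hQ'u : Q'.1 = Finset.univ := Finset.univ_subset_iff.mp (hQu ▸ hss)
      exact hne (Subtype.ext (hQ'u.trans hQu.symm))
    | succ k ih =>
      intro Q hQ hk
      refine step Q hQ fun Q' hne hss => ?_
      have hOB' : ¬ OneBlk blk Q'.1 := fun h => hQ (fun a ha b hb => h a (hss ha) b (hss hb))
      have hssne : Q.1 ≠ Q'.1 := fun h => hne (Subtype.ext h.symm)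
      have hlt : Q.1.card < Q'.1.card :=
        Finset.card_lt_card (Finset.ssubset_iff_subset_ne.mpr ⟨hss, hssne⟩)
      have hc' : Q'.1.card ≤ n := by
        simpa using Finset.card_le_card (Finset.subset_univ Q'.1)
      exact ih Q' hOB' (by omega)
  intro Q
  rcases Q.2 with hE | hOB
  · -- Q.1 = ∅ : use the total sum
    have h := hsum
    rw [Finset.sum_eq_single Q] at h
    · exact h
    · intro Q' _ hne
      have : Q'.1 ≠ ∅ := fun h' => hne (Subtype.ext (h'.trans hE.symm))
      rcases Q'.2 with h'' | h''
      · exact absurd h'' this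
      · exact key n Q' h'' (by omega)
    · intro h'; exact absurd (Finset.mem_univ Q) h'
  · exact key n Q hOB (by omega)

lemma affInd_fP (blk : Fin n → Fin m) :
    AffineIndependent ℝ
      (fun P : {P : Finset (Fin n) // P = ∅ ∨ ¬ OneBlk blk P} => fP blk P.1) := by
  classical
  rw [affineIndependent_iff]
  intro s w hsum hcomb e he
  have h1 : ∑ Q : {P : Finset (Fin n) // P = ∅ ∨ ¬ OneBlk blk P},
      (if Q ∈ s then w Q else 0) = 0 := by
    rw [Finset.sum_ite_mem, Finset.univ_inter]; exact hsum
  have h2 : ∑ Q : {P : Finset (Fin n) // P = ∅ ∨ ¬ OneBlk blk P},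
      (if Q ∈ s then w Q else 0) • fP blk Q.1 = 0 := by
    have heq : ∀ Q : {P : Finset (Fin n) // P = ∅ ∨ ¬ OneBlk blk P},
        (if Q ∈ s then w Q else 0) • fP blk Q.1 =
          if Q ∈ s then w Q • fP blk Q.1 else 0 := by
      intro Q; split <;> simp
    rw [Finset.sum_congr rfl (fun Q _ => heq Q), Finset.sum_ite_mem, Finset.univ_inter]
    exact hcomb
  have := wzero blk _ h1 h2 e
  simpa [he] using this

end CIMAux


/-- **CIM of a star of cliques is a simplex.**  If `G'` on `[p-1]` is a vertex disjoint
union of complete graphs `K_{p_1}, …, K_{p_m}` (blocks of `blk`, each nonempty by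
surjectivity, with `∑ p_s = p - 1 = n`), and `G` additionally joins a new node to all of
`[p-1]`, then `CIM_G` is a simplex of dimension
`d = 2^{p-1} - 1 - ∑_{s ∈ [m]} (2^{p_s} - 1)`. -/
theorem cim_star_of_cliques_simplex (n m : ℕ) (blk : Fin n → Fin m)
    (hsurj : Function.Surjective blk) (d : ℕ)
    (hd : (d : ℤ) = 2 ^ n - 1 -
      ∑ s : Fin m, ((2 : ℤ) ^ ((Finset.univ.filter (fun a => blk a = s)).card) - 1)) :
    IsSimplexOfDim (CIM (starCliqueGraph n m blk)) d := by
  classical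
  have hcardI : Fintype.card {P : Finset (Fin n) // P = ∅ ∨ ¬ OneBlk blk P} = d + 1 := by
    have h := card_I blk
    have hz := congrArg (fun k : ℕ => (k : ℤ)) h
    simp only [Nat.cast_add, Nat.cast_sum, Nat.cast_pow, Nat.cast_ofNat] at hz
    have hterm : ∀ s : Fin m,
        ((2 ^ ((Finset.univ.filter (fun a => blk a = s)).card) - 1 : ℕ) : ℤ) =
          (2 : ℤ) ^ ((Finset.univ.filter (fun a => blk a = s)).card) - 1 := by
      intro s
      rw [Nat.cast_sub Nat.one_le_two_pow]
      push_cast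
      ring
    rw [Finset.sum_congr rfl (fun s _ => hterm s)] at hz
    have : (Fintype.card {P : Finset (Fin n) // P = ∅ ∨ ¬ OneBlk blk P} : ℤ) = (d : ℤ) + 1 := by
      linarith
    exact_mod_cast this
  set e : Fin (d + 1) ≃ {P : Finset (Fin n) // P = ∅ ∨ ¬ OneBlk blk P} :=
    (Fintype.equivFinOfCardEq hcardI).symm with he
  refine ⟨fun k => fP blk (e k).1, ?_, ?_⟩
  · exact (affInd_fP blk).comp_embedding e.toEmbedding
  · show convexHull ℝ _ = _
    congr 1
    ext f
    constructor
    · rintro ⟨D, hsk, rfl⟩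
      rw [imset_eq_fP blk D hsk]
      by_cases hOB : OneBlk blk (Finset.univ.filter (fun a => D.adj (some a) none))
      · rw [fP_eq_empty blk hOB]
        exact ⟨e.symm ⟨∅, Or.inl rfl⟩, by simp only [Equiv.apply_symm_apply]⟩
      · exact ⟨e.symm ⟨_, Or.inr hOB⟩, by simp only [Equiv.apply_symm_apply]⟩
    · rintro ⟨k, rfl⟩
      refine ⟨DP blk (e k).1, skeleton_DP blk (e k).1, ?_⟩
      rw [imset_eq_fP blk (DP blk (e k).1) (skeleton_DP blk (e k).1), pa_DP]
end

section
/- Let 𝒢 and ℋ be two essential graphs on node set [p] with the same skeleton G, and suppose G is a tree. Then j ∈ Δ(𝒢, ℋ) if and only if 𝒢 and ℋ contain different sets of v-structures centered at j (i.e., there is a v-structure a → j ← b present in exactly one of 𝒢 and ℋ). -/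
open Classical

/-- The set `Δ(𝒢,ℋ)` of nodes `i` at which the characteristic imsets of `D` and `E` differ
on a set `S` with `i ∈ S ⊆ ne(i) ∪ {i}` and `|S| ≥ 3`. -/
def deltaSet {V : Type} (D E : DAG V) : Set V :=
  { i | ∃ S : Finset V, i ∈ S ∧ (↑S : Set V) ⊆ insert i (D.skeleton.neighborSet i) ∧
      3 ≤ S.card ∧ D.imset S ≠ E.imset S }


lemma triangle_free {V : Type} {G : SimpleGraph V} (h : G.IsAcyclic) {a b c : V}
    (hab : G.Adj a b) (hbc : G.Adj b c) (hca : G.Adj c a) : False := by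
  refine h (SimpleGraph.Walk.cons hab (SimpleGraph.Walk.cons hbc
    (SimpleGraph.Walk.cons hca SimpleGraph.Walk.nil))) ?_
  have h1 := hab.ne; have h2 := hbc.ne; have h3 := hca.ne
  constructor
  · constructor
    · simp [SimpleGraph.Walk.isTrail_def, Sym2.eq_iff]
      tauto
    · simp
  · simp [h1, h2, h3, Ne.symm h3, Ne.symm h1]

lemma third_elem {V : Type} {S : Finset V} {i j : V} (hiS : i ∈ S) (hjS : j ∈ S)
    (hij : i ≠ j) (hcard : 3 ≤ S.card) : ∃ m ∈ S, m ≠ i ∧ m ≠ j := by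
  by_contra hm
  push_neg at hm
  have hsub : S ⊆ {i, j} := by
    intro x hx
    by_cases hxi : x = i
    · simp [hxi]
    · simp [hm x hx hxi]
  have h2 := Finset.card_le_card hsub
  have h3 : ({i, j} : Finset V).card ≤ 2 :=
    (Finset.card_insert_le i {j}).trans (by simp)
  omega

lemma cond_forces {V : Type} (D : DAG V) {j : V} {S : Finset V}
    (hacyc : D.skeleton.IsAcyclic) (hjS : j ∈ S)
    (hsub : (↑S : Set V) ⊆ insert j (D.skeleton.neighborSet j)) (hcard : 3 ≤ S.card)
    {i : V} (hiS : i ∈ S) (hi : ∀ k ∈ S, k ≠ i → D.adj k i) :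
    ∀ k ∈ S, k ≠ j → D.adj k j := by
  by_cases hij : i = j
  · subst hij; exact hi
  · exfalso
    obtain ⟨m, hmS, hmi, hmj⟩ := third_elem hiS hjS hij hcard
    have hji : D.skeleton.Adj j i := by
      have h := hsub hiS
      simp only [Set.mem_insert_iff, SimpleGraph.mem_neighborSet] at h
      rcases h with h | h
      · exact absurd h hij
      · exact h
    have hjm : D.skeleton.Adj j m := by
      have h := hsub hmS
      simp only [Set.mem_insert_iff, SimpleGraph.mem_neighborSet] at h
      rcases h with h | h
      · exact absurd h hmj
      · exact h
    exact triangle_free hacyc hjm (Or.inl (hi m hmS hmi)) hji.symm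

lemma exists_vstruct {p : ℕ} (D E : DAG (Fin p)) (hskel : D.skeleton = E.skeleton)
    (hacyc : D.skeleton.IsAcyclic) {j : Fin p} {S : Finset (Fin p)} (hjS : j ∈ S)
    (hsub : (↑S : Set (Fin p)) ⊆ insert j (D.skeleton.neighborSet j)) (hcard : 3 ≤ S.card)
    (hD : ∀ k ∈ S, k ≠ j → D.adj k j) (hE : ¬ ∀ k ∈ S, k ≠ j → E.adj k j) :
    ∃ a b, D.IsVStructure a j b ∧ ¬ E.IsVStructure a j b := by
  push_neg at hE
  obtain ⟨a, haS, haj, hEa⟩ := hE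
  obtain ⟨b, hbS, hba, hbj⟩ := third_elem haS hjS haj hcard
  have hja : D.skeleton.Adj j a := by
    have h := hsub haS
    simp only [Set.mem_insert_iff, SimpleGraph.mem_neighborSet] at h
    rcases h with h | h
    · exact absurd h haj
    · exact h
  have hjb : D.skeleton.Adj j b := by
    have h := hsub hbS
    simp only [Set.mem_insert_iff, SimpleGraph.mem_neighborSet] at h
    rcases h with h | h
    · exact absurd h hbj
    · exact h
  have hnadj : ¬ D.skeleton.Adj a b := fun h => triangle_free hacyc hja h hjb.symm
  refine ⟨a, b, ⟨Ne.symm hba, hD a haS haj, hD b hbS hbj,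
      fun h => hnadj (Or.inl h), fun h => hnadj (Or.inr h)⟩,
      fun h => hEa h.2.1⟩

lemma vstruct_delta {p : ℕ} (D E : DAG (Fin p)) (hskel : D.skeleton = E.skeleton)
    {a j b : Fin p} (hD : D.IsVStructure a j b) (hE : ¬ E.IsVStructure a j b) :
    ∃ S : Finset (Fin p), j ∈ S ∧ (↑S : Set (Fin p)) ⊆ insert j (D.skeleton.neighborSet j) ∧
      3 ≤ S.card ∧ D.imset S = 1 ∧ E.imset S = 0 := by
  obtain ⟨hab, haj, hbj, hnab, hnba⟩ := hD
  have hja : D.skeleton.Adj j a := (Or.inl haj : D.skeleton.Adj a j).symm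
  have hjb : D.skeleton.Adj j b := (Or.inl hbj : D.skeleton.Adj b j).symm
  have haj' : a ≠ j := hja.ne'
  have hbj' : b ≠ j := hjb.ne'
  refine ⟨{a, j, b}, by simp, ?_, ?_, ?_, ?_⟩
  · intro x hx
    simp only [Finset.coe_insert, Finset.coe_singleton, Set.mem_insert_iff,
      Set.mem_singleton_iff] at hx
    rcases hx with rfl | rfl | rfl
    · exact Set.mem_insert_of_mem _ hja
    · exact Set.mem_insert _ _
    · exact Set.mem_insert_of_mem _ hjb
  · rw [Finset.card_insert_of_notMem (by simp [haj', hab]),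
      Finset.card_insert_of_notMem (by simp [Ne.symm hbj']), Finset.card_singleton]
  · rw [DAG.imset, if_pos]
    refine ⟨?_, j, by simp, ?_⟩
    · rw [Finset.card_insert_of_notMem (by simp [haj', hab]),
        Finset.card_insert_of_notMem (by simp [Ne.symm hbj']), Finset.card_singleton]
      omega
    · intro k hk hkj
      simp only [Finset.mem_insert, Finset.mem_singleton] at hk
      rcases hk with rfl | rfl | rfl
      · exact haj
      · exact absurd rfl hkj
      · exact hbj
  · rw [DAG.imset, if_neg]
    rintro ⟨-, i, hiS, hi⟩
    have hnEab : ¬ E.skeleton.Adj a b := by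
      rw [← hskel]
      rintro (h | h)
      · exact hnab h
      · exact hnba h
    simp only [Finset.mem_insert, Finset.mem_singleton] at hiS
    rcases hiS with rfl | rfl | rfl
    · exact hnEab (Or.inr (hi b (by simp) (Ne.symm hab)))
    · exact hE ⟨hab, hi a (by simp) haj', hi b (by simp) hbj',
        fun h => hnEab (Or.inl h), fun h => hnEab (Or.inr h)⟩
    · exact hnEab (Or.inl (hi a (by simp) hab))

/-- **`Δ` detects v-structure differences.**  Let `D` and `E` (representing essential
graphs) have the same skeleton, a tree.  Then `j ∈ Δ(D,E)` iff `D` and `E` contain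
different sets of v-structures centered at `j`. -/
theorem mem_deltaSet_iff_vstructures_differ {p : ℕ} (D E : DAG (Fin p))
    (hskel : D.skeleton = E.skeleton) (htree : D.skeleton.IsTree) (j : Fin p) :
    j ∈ deltaSet D E ↔ ∃ a b, ¬ (D.IsVStructure a j b ↔ E.IsVStructure a j b) := by
  have hacycD : D.skeleton.IsAcyclic := htree.IsAcyclic
  constructor
  · rintro ⟨S, hjS, hsub, hcard, hne⟩
    have key : ∀ (F : DAG (Fin p)), F.skeleton = D.skeleton →
        F.imset S = if (∀ k ∈ S, k ≠ j → F.adj k j) then 1 else 0 := by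
      intro F hF
      have hacycF : F.skeleton.IsAcyclic := by rw [hF]; exact hacycD
      have hsubF : (↑S : Set (Fin p)) ⊆ insert j (F.skeleton.neighborSet j) := by
        rw [hF]; exact hsub
      by_cases hc : ∀ k ∈ S, k ≠ j → F.adj k j
      · rw [if_pos hc, DAG.imset, if_pos ⟨by omega, j, hjS, fun k hk hkj => hc k hk hkj⟩]
      · rw [if_neg hc, DAG.imset, if_neg]
        rintro ⟨-, i, hiS, hi⟩
        exact hc (cond_forces F hacycF hjS hsubF hcard hiS hi)
    rw [key D rfl, key E hskel.symm] at hne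
    by_cases hcD : ∀ k ∈ S, k ≠ j → D.adj k j <;>
      by_cases hcE : ∀ k ∈ S, k ≠ j → E.adj k j
    · rw [if_pos hcD, if_pos hcE] at hne; exact absurd rfl hne
    · obtain ⟨a, b, h1, h2⟩ := exists_vstruct D E hskel hacycD hjS hsub hcard hcD hcE
      exact ⟨a, b, fun hiff => h2 (hiff.mp h1)⟩
    · obtain ⟨a, b, h1, h2⟩ := exists_vstruct E D hskel.symm
        (by rw [← hskel]; exact hacycD) hjS (by rw [← hskel]; exact hsub) hcard hcE hcD
      exact ⟨a, b, fun hiff => h2 (hiff.mpr h1)⟩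
    · rw [if_neg hcD, if_neg hcE] at hne; exact absurd rfl hne
  · rintro ⟨a, b, hnab⟩
    by_cases hDv : D.IsVStructure a j b
    · have hEv : ¬ E.IsVStructure a j b := fun h => hnab ⟨fun _ => h, fun _ => hDv⟩
      obtain ⟨S, h1, h2, h3, e1, e0⟩ := vstruct_delta D E hskel hDv hEv
      exact ⟨S, h1, h2, h3, by rw [e1, e0]; norm_num⟩
    · have hEv : E.IsVStructure a j b := by
        by_contra h
        exact hnab ⟨fun hd => absurd hd hDv, fun he => absurd he h⟩
      obtain ⟨S, h1, h2, h3, e1, e0⟩ := vstruct_delta E D hskel.symm hEv hDv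
      exact ⟨S, h1, by rw [hskel]; exact h2, h3, by rw [e0, e1]; norm_num⟩
end

section
/- Let P be a polytope and let v be a vertex of P. If there exist nonzero vectors u₁ and u₂ such that v + u₁, v + u₂, and v + u₁ + u₂ are all vertices of P, then conv(v, v + u₁ + u₂) is not an edge of P. -/
open Classical

/-- **Square lemma.**  Let `P` be a polytope and `v` a vertex (extreme point) of `P`.  If
there are nonzero vectors `u₁`, `u₂` such that `v + u₁`, `v + u₂` and `v + u₁ + u₂` are all
vertices of `P`, then `conv(v, v + u₁ + u₂)` is not an edge of `P`. -/
theorem square_not_edge {W : Type*} [AddCommGroup W] [Module ℝ W] (P : Set W)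
    (hP : ∃ t : Finset W, P = convexHull ℝ (t : Set W))
    (v u₁ u₂ : W) (hu₁ : u₁ ≠ 0) (hu₂ : u₂ ≠ 0)
    (hv : v ∈ P.extremePoints ℝ) (hv₁ : v + u₁ ∈ P.extremePoints ℝ)
    (hv₂ : v + u₂ ∈ P.extremePoints ℝ) (hv₁₂ : v + u₁ + u₂ ∈ P.extremePoints ℝ) :
    ¬ IsPolytopeEdge P v (v + u₁ + u₂) := by
  rintro ⟨hne, φ, hmax, hiff⟩
  have hvP : v ∈ P := hv.1
  have hv1P : v + u₁ ∈ P := hv₁.1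
  have hv2P : v + u₂ ∈ P := hv₂.1
  have hv12P : v + u₁ + u₂ ∈ P := hv₁₂.1
  have h12 : φ (v + u₁ + u₂) = φ v :=
    (hiff _ hv12P).2 (right_mem_segment ℝ _ _)
  have h12' : φ u₁ + φ u₂ = 0 := by
    have := h12
    simp only [map_add] at this
    linarith
  have ha1 : φ u₁ ≤ 0 := by
    have := hmax _ hv1P
    simp only [map_add] at this
    linarith
  have ha2 : φ u₂ ≤ 0 := by
    have := hmax _ hv2P
    simp only [map_add] at this
    linarith
  have hφ1 : φ u₁ = 0 := by linarith
  have hseg : v + u₁ ∈ segment ℝ v (v + u₁ + u₂) := by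
    refine (hiff _ hv1P).1 ?_
    simp [map_add, hφ1]
  obtain ⟨a, b, ha, hb, hab, habv⟩ := hseg
  have key : u₁ = b • (u₁ + u₂) := by
    have h : v + b • (u₁ + u₂) = v + u₁ := by
      rw [← habv]
      have : a • v + b • (v + u₁ + u₂) = (a + b) • v + b • (u₁ + u₂) := by
        simp [smul_add, add_smul]; abel
      rw [this, hab, one_smul]
    exact (add_left_cancel h).symm
  rcases eq_or_lt_of_le hb with hb0 | hbpos
  · apply hu₁; rw [key, ← hb0, zero_smul]
  rcases eq_or_lt_of_le ha with ha0 | hapos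
  · have hb1 : b = 1 := by linarith
    apply hu₂
    have h : u₁ + 0 = u₁ + u₂ := by
      rw [add_zero]; nth_rewrite 1 [key]; rw [hb1, one_smul]
    exact (add_left_cancel h).symm
  · have hopen : v + u₁ ∈ openSegment ℝ v (v + u₁ + u₂) :=
      ⟨a, b, hapos, hbpos, hab, habv⟩
    have h1 := hv₁.2 hvP hv12P hopen
    apply hu₁
    have h : v + 0 = v + u₁ := by rw [add_zero]; exact h1
    exact (add_left_cancel h).symm
end

section
/- Let 𝒢 and ℋ be DAGs with the same skeleton G, where G is a tree, such that the set of edges on which 𝒢 and ℋ differ in orientation forms a subtree T of G, and such that Δ(𝒢,ℋ) ≠ ∅. For an internal node i of T with |T ∩ ch_𝒢(i)| = 1 write 𝔠_i for the unique element of T ∩ ch_𝒢(i), and with |T ∩ pa_𝒢(i)| = 1 write 𝔭_i for the unique element of T ∩ pa_𝒢(i). Then the essential graphs of 𝒢 and ℋ form an essential flip if and only if every internal node i of T satisfies the condition of its type: (I) |T∩pa_𝒢(i)| ≥ 2 and |T∩ch_𝒢(i)| ≥ 2: no condition; (II) |T∩pa_𝒢(i)| ≥ 2 and |T∩ch_𝒢(i)|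 = 0: no condition; (III) |T∩pa_𝒢(i)| = 0 and |T∩ch_𝒢(i)| ≥ 2: no condition; (IV) |T∩pa_𝒢(i)| ≥ 2 and |T∩ch_𝒢(i)| = 1: either |pa_𝒢(i) ∖ T| ≥ 1, or (if there exists a v-structure centered at 𝔠_i in 𝒢 then 𝔠_i has an essential parent in ℋ); (V) |T∩pa_𝒢(i)| = 1 and |T∩ch_𝒢(i)| ≥ 2: either |pa_𝒢(i) ∖ T| ≥ 1, or (if there exists a v-structure centered at 𝔭_i in ℋ then 𝔭_i has an essential parent in 𝒢); (VI) |T∩pa_𝒢(i)| = 1 and |T∩ch_𝒢(i)| = 1: if both connected components of T ∖ {i} contain nodes of Δ(𝒢,ℋ), then either |pa_𝒢(i) ∖ T| ≥ 1, or (𝔠_i has an essential parent in ℋ and 𝔭_i has an essential parent in 𝒢). -/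
open Classical

/-- The minimal subtree of `G` spanned by a vertex set `A`: all vertices lying on a path
between two elements of `A`. -/
def treeSpan {V : Type} (G : SimpleGraph V) (A : Set V) : Set V :=
  { v | ∃ a ∈ A, ∃ b ∈ A, ∃ w : G.Walk a b, w.IsPath ∧ v ∈ w.support }

/-- The pair `{D, E}` (of representatives of essential graphs with common tree skeleton) is
an *essential flip*: they are not Markov equivalent, and every edge of the minimal subtree
spanned by `Δ(D,E)` is essential in both essential graphs, with opposite orientations. -/
def EssentialFlip {V : Type} (D E : DAG V) : Prop :=
  ¬ MarkovEquiv D E ∧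
  ∀ a b : V, a ∈ treeSpan D.skeleton (deltaSet D E) → b ∈ treeSpan D.skeleton (deltaSet D E) →
    D.skeleton.Adj a b →
    ((D.Essential a b ∧ E.Essential b a) ∨ (D.Essential b a ∧ E.Essential a b))

/-- The parents of `i` in `D` lying in `T`. -/
noncomputable def paIn {V : Type} (D : DAG V) (T : Finset V) (i : V) : Finset V :=
  T.filter (fun j => D.adj j i)

/-- The children of `i` in `D` lying in `T`. -/
noncomputable def chIn {V : Type} (D : DAG V) (T : Finset V) (i : V) : Finset V :=
  T.filter (fun j => D.adj i j)

/-- There exists a node of `A` in the connected component of `x` of the subtree on `T`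
with the node `i` removed. -/
def ReachesAvoiding {V : Type} (G : SimpleGraph V) (T : Finset V) (i x : V) (A : Set V) : Prop :=
  ∃ d ∈ A, ∃ w : G.Walk x d, ∀ v ∈ w.support, v ∈ T ∧ v ≠ i

section AuxBasic

open Relation SimpleGraph

variable {V : Type}

lemma DAG.asymm (D : DAG V) {a b : V} (h : D.adj a b) (h' : D.adj b a) : False :=
  D.acyclic a (Relation.TransGen.tail (Relation.TransGen.single h) h')

lemma DAG.irr (D : DAG V) {a : V} (h : D.adj a a) : False :=
  D.acyclic a (Relation.TransGen.single h)

lemma DAG.ne_of_adj (D : DAG V) {a b : V} (h : D.adj a b) : a ≠ b := by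
  rintro rfl; exact D.irr h

/-- In an acyclic graph, two distinct neighbors of a common vertex are non-adjacent. -/
lemma no_triangle {G : SimpleGraph V} (hG : G.IsAcyclic) {a b c : V}
    (hab : G.Adj a c) (hbc : G.Adj b c) (hne : a ≠ b) : ¬ G.Adj a b := by
  intro h
  have hpu := SimpleGraph.isAcyclic_iff_path_unique.mp hG
  have h1 : (Walk.cons h Walk.nil : G.Walk a b).IsPath := by
    simp [Walk.isPath_def, hne]
  have h2 : (Walk.cons hab (Walk.cons hbc.symm Walk.nil) : G.Walk a b).IsPath := by
    simp [Walk.isPath_def, hne, hab.ne, hbc.ne']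
  have := hpu ⟨_, h1⟩ ⟨_, h2⟩
  have := congrArg (fun q : G.Path a b => q.1.length) this
  simp [Walk.length_cons] at this

/-- A walk whose darts are all directed gives `ReflTransGen`. -/
lemma dirWalk_rtg {G : SimpleGraph V} (adj : V → V → Prop) :
    ∀ {a b : V} (p : G.Walk a b),
      (∀ d ∈ p.darts, adj d.toProd.1 d.toProd.2) → Relation.ReflTransGen adj a b := by
  intro a b p
  induction p with
  | nil => intro _; exact Relation.ReflTransGen.refl
  | cons h q ih =>
    intro hd
    have h1 := hd ⟨(_, _), h⟩ (by simp)
    exact Relation.ReflTransGen.head h1 (ih fun d hdm => hd d (by simp [hdm]))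

/-- A `TransGen` of an orientation of an acyclic graph yields a directed graph path. -/
lemma transGen_dirPath {G : SimpleGraph V} (hG : G.IsAcyclic)
    (adj : V → V → Prop) (hsub : ∀ a b, adj a b → G.Adj a b)
    (hanti : ∀ a b, adj a b → ¬ adj b a) :
    ∀ {a b : V}, Relation.TransGen adj a b →
      ∃ p : G.Walk a b, p.IsPath ∧ 0 < p.length ∧
        ∀ d ∈ p.darts, adj d.toProd.1 d.toProd.2 := by
  classical
  intro a b h
  induction h with
  | @single b' hb' =>
    refine ⟨Walk.cons (hsub _ _ hb') Walk.nil, ?_, by simp, ?_⟩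
    · have : a ≠ b' := by rintro rfl; exact hanti _ _ hb' hb'
      simp [Walk.isPath_def, this]
    · intro d hd; simp [Walk.darts_cons] at hd; subst hd; exact hb'
  | @tail b' c h1 hbc ih =>
    obtain ⟨p, hp, hl, hd⟩ := ih
    by_cases hc : c ∈ p.support
    · exfalso
      have hq := p.dropUntil c hc
      have hqpath : (p.dropUntil c hc).IsPath := hp.dropUntil hc
      have hqdir : ∀ d ∈ (p.dropUntil c hc).darts, adj d.toProd.1 d.toProd.2 :=
        fun d hd' => hd d (Walk.darts_dropUntil_subset p hc hd')
      by_cases hcb : c = b'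
      · subst hcb; exact hanti _ _ hbc hbc
      · -- two paths from c to b' : dropUntil, and the single edge
        have hsingle : (Walk.cons (hsub _ _ hbc).symm Walk.nil : G.Walk c b').IsPath := by
          simp [Walk.isPath_def, hcb]
        have hpu := SimpleGraph.isAcyclic_iff_path_unique.mp hG
        have heq := hpu ⟨_, hqpath⟩ ⟨_, hsingle⟩
        have heq' : (p.dropUntil c hc) = Walk.cons (hsub _ _ hbc).symm Walk.nil :=
          congrArg Subtype.val heq
        have : adj c b' := by
          have hdm : ∀ d ∈ (Walk.cons (hsub _ _ hbc).symm Walk.nil : G.Walk c b').darts,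
              adj d.toProd.1 d.toProd.2 := heq' ▸ hqdir
          exact hdm ⟨(c, b'), (hsub _ _ hbc).symm⟩ (by simp)
        exact hanti _ _ this hbc
    · refine ⟨p.concat (hsub _ _ hbc), ?_, ?_, ?_⟩
      · refine Walk.IsPath.mk' ?_
        rw [Walk.support_concat]
        simp only [List.concat_eq_append, List.nodup_append]
        exact ⟨hp.support_nodup, by simp, by intro a ha b hb hab; rw [List.mem_singleton] at hb; rw [hab, hb] at ha; exact hc ha⟩
      · simp [Walk.length_concat]
      · intro d hd'
        rw [Walk.darts_concat, List.concat_eq_append] at hd'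
        rcases List.mem_append.mp hd' with h | h
        · exact hd d h
        · simp at h; subst h; exact hbc

/-- Any orientation of an acyclic simple graph is acyclic. -/
lemma orient_acyclic {G : SimpleGraph V} (hG : G.IsAcyclic)
    (adj : V → V → Prop) (hsub : ∀ a b, adj a b → G.Adj a b)
    (hanti : ∀ a b, adj a b → ¬ adj b a) : ∀ v, ¬ Relation.TransGen adj v v := by
  intro v h
  obtain ⟨p, hp, hl, -⟩ := transGen_dirPath hG adj hsub hanti h
  rw [Walk.isPath_iff_eq_nil] at hp
  subst hp; simp at hl

end AuxBasic

section AuxForced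

open Relation SimpleGraph

variable {V : Type}

/-- `z` has two distinct parents. -/
def TwoPar (D : DAG V) (z : V) : Prop := ∃ x y, x ≠ y ∧ D.adj x z ∧ D.adj y z

/-- The closed-form criterion for essential (forced) arrows in a DAG with
triangle-free skeleton. -/
def Fcd (D : DAG V) (a b : V) : Prop :=
  D.adj a b ∧ ∃ z, TwoPar D z ∧ (z = b ∨ Relation.ReflTransGen D.adj z a)

/-- Triangle-freeness of the skeleton, packaged. -/
def TF (D : DAG V) : Prop :=
  ∀ {x y z : V}, D.skeleton.Adj x z → D.skeleton.Adj y z → x ≠ y → ¬ D.skeleton.Adj x y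

lemma tf_of_tree {D : DAG V} {G : SimpleGraph V} (hD : D.skeleton = G)
    (htree : G.IsAcyclic) : TF D := by
  subst hD; intro x y z h1 h2 h3; exact no_triangle htree h1 h2 h3

lemma essential_of_twoPar {D : DAG V} (hTF : TF D) {a b : V}
    (hab : D.adj a b) (h2 : TwoPar D b) : D.Essential a b := by
  obtain ⟨x, y, hxy, hx, hy⟩ := h2
  obtain ⟨c, hc, hca⟩ : ∃ c, D.adj c b ∧ c ≠ a := by
    by_cases hxa : x = a
    · exact ⟨y, hy, fun e => hxy (hxa.trans e.symm)⟩
    · exact ⟨x, hx, hxa⟩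
  have hnadj : ¬ D.skeleton.Adj c a := hTF (Or.inl hc) (Or.inl hab) hca
  have hv : D.IsVStructure c b a :=
    ⟨hca, hc, hab, fun h => hnadj (Or.inl h), fun h => hnadj (Or.inr h)⟩
  exact ⟨hab, fun E hME => ((hME.2 c b a).mp hv).2.2.1⟩

lemma essential_step {D : DAG V} (hTF : TF D) {p w b' : V}
    (hpw : D.Essential p w) (hwb : D.adj w b') : D.Essential w b' := by
  refine ⟨hwb, fun E hME => ?_⟩
  by_contra hne
  have hskel := hME.1
  have hadj' : E.adj b' w := by
    have hsk : E.skeleton.Adj w b' := by rw [← hskel]; exact Or.inl hwb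
    rcases hsk with h | h
    · exact absurd h hne
    · exact h
  have hEpw : E.adj p w := hpw.2 E hME
  have hpb' : p ≠ b' := fun e => D.asymm hwb (e ▸ hpw.1)
  have hnadj : ¬ D.skeleton.Adj p b' := hTF (Or.inl hpw.1) (Or.inr hwb) hpb'
  have hnadjE : ¬ E.skeleton.Adj p b' := by rw [← hskel]; exact hnadj
  have hv : E.IsVStructure p w b' :=
    ⟨hpb', hEpw, hadj', fun h => hnadjE (Or.inl h), fun h => hnadjE (Or.inr h)⟩
  exact D.asymm hwb ((hME.2 p w b').mpr hv).2.2.1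

lemma fcd_chain {D : DAG V} (hTF : TF D) {z w : V} (h2 : TwoPar D z)
    (h : Relation.ReflTransGen D.adj z w) :
    ∀ b', D.adj w b' → D.Essential w b' := by
  induction h with
  | refl =>
    intro b' hb'
    obtain ⟨x, y, hxy, hx, hy⟩ := h2
    exact essential_step hTF (essential_of_twoPar hTF hx ⟨x, y, hxy, hx, hy⟩) hb'
  | tail h1 h2' ih =>
    intro b' hb'
    exact essential_step hTF (ih _ h2') hb'

/-- Soundness: the criterion implies essentiality. -/
lemma fcd_essential {D : DAG V} (hTF : TF D) {a b : V} (h : Fcd D a b) :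
    D.Essential a b := by
  obtain ⟨hab, z, h2, hz | hz⟩ := h
  · subst hz; exact essential_of_twoPar hTF hab h2
  · exact fcd_chain hTF h2 hz b hab

/-- Completeness: a non-forced arrow can be reversed within the Markov equivalence class. -/
lemma fcd_complete {D : DAG V} (hTF : TF D) (hGacyc : D.skeleton.IsAcyclic) {a b : V}
    (hab : D.adj a b) (hnf : ¬ Fcd D a b) :
    ∃ E : DAG V, MarkovEquiv D E ∧ E.adj b a := by
  classical
  set Sp : V → Prop := fun v => v = b ∨ v = a ∨ Relation.TransGen D.adj v a with hSp
  have hα : ∀ c, D.adj c b → c = a := by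
    intro c hc
    by_contra hca
    exact hnf ⟨hab, b, ⟨c, a, hca, hc, hab⟩, Or.inl rfl⟩
  have hβ : ∀ v, (v = a ∨ Relation.TransGen D.adj v a) →
      ∀ x y, D.adj x v → D.adj y v → x = y := by
    intro v hv x y hx hy
    by_contra hne
    refine hnf ⟨hab, v, ⟨x, y, hne, hx, hy⟩, Or.inr ?_⟩
    rcases hv with rfl | hv
    · exact Relation.ReflTransGen.refl
    · exact hv.to_reflTransGen
  -- comparability of ancestors of `a`
  have hcmp : ∀ x y, Relation.ReflTransGen D.adj x a → Relation.ReflTransGen D.adj y a →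
      Relation.ReflTransGen D.adj x y ∨ Relation.ReflTransGen D.adj y x := by
    intro x y hx hy
    induction hx using Relation.ReflTransGen.head_induction_on with
    | refl => exact Or.inr hy
    | head h' h ih =>
      rename_i x x'
      rcases ih with h1 | h1
      · exact Or.inl (Relation.ReflTransGen.head h' h1)
      · rcases Relation.ReflTransGen.cases_tail h1 with rfl | ⟨p, hyp, hpx'⟩
        · exact Or.inl (Relation.ReflTransGen.single h')
        · have hx'a : x' = a ∨ Relation.TransGen D.adj x' a := by
            rcases Relation.ReflTransGen.cases_tail h with h2 | ⟨m, hm1, hm2⟩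
            · exact Or.inl h2.symm
            · exact Or.inr (Relation.TransGen.tail' hm1 hm2)
          have := hβ x' hx'a p x hpx' h'
          subst this
          exact Or.inr hyp
  -- membership in the ancestors-of-`a` part of `Sp`
  have hSrtg : ∀ v, v = a ∨ Relation.TransGen D.adj v a → Relation.ReflTransGen D.adj v a := by
    rintro v (rfl | hv)
    · exact Relation.ReflTransGen.refl
    · exact hv.to_reflTransGen
  -- each member of Sp has at most one child in Sp
  have hγ : ∀ j x₁ x₂, D.adj j x₁ → D.adj j x₂ → Sp x₁ → Sp x₂ → x₁ = x₂ := by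
    have key : ∀ j x₁ x₂, D.adj j x₁ → D.adj j x₂ →
        Relation.ReflTransGen D.adj x₁ a → Relation.ReflTransGen D.adj x₂ a →
        Relation.ReflTransGen D.adj x₁ x₂ → x₁ = x₂ := by
      intro j x₁ x₂ h1 h2 hx1 hx2 h12
      rcases Relation.ReflTransGen.cases_tail h12 with h | ⟨p, hp1, hp2⟩
      · exact h.symm
      · exfalso
        have hx2' : x₂ = a ∨ Relation.TransGen D.adj x₂ a := by
          rcases Relation.ReflTransGen.cases_tail hx2 with h2' | ⟨m, hm1, hm2⟩
          · exact Or.inl h2'.symm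
          · exact Or.inr (Relation.TransGen.tail' hm1 hm2)
        have hpj := hβ x₂ hx2' p j hp2 h2
        rw [hpj] at hp1
        exact D.acyclic j (Relation.TransGen.head' h1 hp1)
    intro j x₁ x₂ h1 h2 hs1 hs2
    rcases hs1 with rfl | hs1
    · -- x₁ = b, so j = a
      have hj := hα j h1; subst hj
      rcases hs2 with rfl | rfl | hs2
      · rfl
      · exact absurd h2 (fun h => D.irr h)
      · exact absurd (Relation.TransGen.head' h2 hs2.to_reflTransGen) (D.acyclic _)
    · rcases hs2 with rfl | hs2
      · have hj := hα j h2; subst hj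
        rcases hs1 with rfl | hs1
        · exact absurd h1 (fun h => D.irr h)
        · exact absurd (Relation.TransGen.head' h1 hs1.to_reflTransGen) (D.acyclic _)
      · have hr1 := hSrtg x₁ hs1
        have hr2 := hSrtg x₂ hs2
        rcases hcmp x₁ x₂ hr1 hr2 with h | h
        · exact key j x₁ x₂ h1 h2 hr1 hr2 h
        · exact (key j x₂ x₁ h2 h1 hr2 hr1 h).symm
  -- parents of Sp-members are ancestors of a
  have hf2 : ∀ x y, Sp y → D.adj x y → x = a ∨ Relation.TransGen D.adj x a := by
    rintro x y (rfl | rfl | hy) hxy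
    · exact Or.inl (hα x hxy)
    · exact Or.inr (Relation.TransGen.single hxy)
    · exact Or.inr (Relation.TransGen.head' hxy hy.to_reflTransGen)
  -- the flipped orientation
  set eadj : V → V → Prop := fun x y => (D.adj x y ∧ ¬ Sp y) ∨ (D.adj y x ∧ Sp x) with headj
  have hsub : ∀ x y, eadj x y → D.skeleton.Adj x y := by
    rintro x y (⟨h, -⟩ | ⟨h, -⟩)
    · exact Or.inl h
    · exact Or.inr h
  have hanti : ∀ x y, eadj x y → ¬ eadj y x := by
    rintro x y (⟨hxy, hnSy⟩ | ⟨hyx, hSx⟩) (⟨hyx', hnSx⟩ | ⟨hxy', hSy⟩)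
    · exact D.asymm hxy hyx'
    · exact hnSy hSy
    · exact hnSx hSx
    · exact D.asymm hxy' hyx
  refine ⟨⟨eadj, orient_acyclic hGacyc eadj hsub hanti⟩, ⟨?_, ?_⟩, Or.inr ⟨hab, Or.inl rfl⟩⟩
  · -- skeletons agree
    ext x y
    show D.adj x y ∨ D.adj y x ↔ eadj x y ∨ eadj y x
    constructor
    · rintro (h | h)
      · by_cases hS : Sp y
        · exact Or.inr (Or.inr ⟨h, hS⟩)
        · exact Or.inl (Or.inl ⟨h, hS⟩)
      · by_cases hS : Sp x
        · exact Or.inl (Or.inr ⟨h, hS⟩)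
        · exact Or.inr (Or.inl ⟨h, hS⟩)
    · rintro ((⟨h, -⟩ | ⟨h, -⟩) | (⟨h, -⟩ | ⟨h, -⟩))
      · exact Or.inl h
      · exact Or.inr h
      · exact Or.inr h
      · exact Or.inl h
  · -- same v-structures
    have hsk' : ∀ x y, (D.adj x y ∨ D.adj y x) ↔ (eadj x y ∨ eadj y x) := by
      intro x y
      constructor
      · rintro (h | h)
        · by_cases hS : Sp y
          · exact Or.inr (Or.inr ⟨h, hS⟩)
          · exact Or.inl (Or.inl ⟨h, hS⟩)
        · by_cases hS : Sp x
          · exact Or.inl (Or.inr ⟨h, hS⟩)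
          · exact Or.inr (Or.inl ⟨h, hS⟩)
      · rintro ((⟨h, -⟩ | ⟨h, -⟩) | (⟨h, -⟩ | ⟨h, -⟩))
        · exact Or.inl h
        · exact Or.inr h
        · exact Or.inr h
        · exact Or.inl h
    intro i j k
    show (i ≠ k ∧ D.adj i j ∧ D.adj k j ∧ ¬ D.adj i k ∧ ¬ D.adj k i) ↔
      (i ≠ k ∧ eadj i j ∧ eadj k j ∧ ¬ eadj i k ∧ ¬ eadj k i)
    by_cases hS : Sp j
    · constructor
      · rintro ⟨hik, hij, hkj, -⟩
        exfalso
        rcases hS with rfl | hS'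
        · exact hik ((hα i hij).trans (hα k hkj).symm)
        · exact hik (hβ j hS' i k hij hkj)
      · rintro ⟨hik, hij, hkj, -⟩
        exfalso
        have h1 : D.adj j i ∧ Sp i := hij.resolve_left (fun h => h.2 hS)
        have h2 : D.adj j k ∧ Sp k := hkj.resolve_left (fun h => h.2 hS)
        exact hik (hγ j i k h1.1 h2.1 h1.2 h2.2)
    · have hpar : ∀ x, eadj x j ↔ D.adj x j := by
        intro x
        constructor
        · rintro (⟨h, -⟩ | ⟨h1, h2⟩)
          · exact h
          · exact absurd ((fun h => (Or.inr h : Sp j)) <| by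
              rcases hf2 j x h2 h1 with h | h
              · exact Or.inl h
              · exact Or.inr h) hS
        · intro h; exact Or.inl ⟨h, hS⟩
      constructor
      · rintro ⟨hik, hij, hkj, hn1, hn2⟩
        have hne : ¬ (eadj i k ∨ eadj k i) := fun hor =>
          (not_or.mpr ⟨hn1, hn2⟩) ((hsk' i k).mpr hor)
        exact ⟨hik, (hpar i).mpr hij, (hpar k).mpr hkj,
          fun h => hne (Or.inl h), fun h => hne (Or.inr h)⟩
      · rintro ⟨hik, hij, hkj, hn1, hn2⟩
        have hne : ¬ (D.adj i k ∨ D.adj k i) := fun hor =>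
          (not_or.mpr ⟨hn1, hn2⟩) ((hsk' i k).mp hor)
        exact ⟨hik, (hpar i).mp hij, (hpar k).mp hkj,
          fun h => hne (Or.inl h), fun h => hne (Or.inr h)⟩

/-- On triangle-free acyclic skeletons: essential iff forced. -/
lemma essential_iff_fcd {D : DAG V} (hTF : TF D) (hGacyc : D.skeleton.IsAcyclic) {a b : V} :
    D.Essential a b ↔ Fcd D a b := by
  constructor
  · intro h
    by_contra hnf
    obtain ⟨E, hME, hba⟩ := fcd_complete hTF hGacyc h.1 hnf
    exact E.asymm (h.2 E hME) hba
  · exact fcd_essential hTF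

end AuxForced

section AuxTree

open SimpleGraph

variable {n : ℕ} {G : SimpleGraph (Fin n)}

lemma induce_walk_exists {T : Set (Fin n)} :
    ∀ {a b : ↑T} (_ : (G.induce T).Walk a b),
      ∃ w : G.Walk a.1 b.1, ∀ v ∈ w.support, v ∈ T := by
  intro a b q
  induction q with
  | nil => exact ⟨Walk.nil, by intro v hv; simp at hv; subst hv; exact Subtype.coe_prop _⟩
  | @cons x y z h q ih =>
    obtain ⟨w, hw⟩ := ih
    refine ⟨Walk.cons h w, ?_⟩
    intro v hv
    change v ∈ (x : Fin n) :: w.support at hv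
    rcases List.mem_cons.mp hv with rfl | hv
    · exact x.2
    · exact hw v hv

/-- In a tree, any path between vertices of a connected set stays in the set. -/
lemma path_in_T (htree : G.IsTree) {T : Set (Fin n)} (hconn : (G.induce T).Connected)
    {x y : Fin n} (hx : x ∈ T) (hy : y ∈ T) (w : G.Walk x y) (hw : w.IsPath) :
    ∀ v ∈ w.support, v ∈ T := by
  classical
  obtain ⟨q⟩ := hconn.preconnected ⟨x, hx⟩ ⟨y, hy⟩
  obtain ⟨w', hw'⟩ := induce_walk_exists q
  have hpu := SimpleGraph.isAcyclic_iff_path_unique.mp htree.IsAcyclic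
  have heq : w = w'.bypass :=
    congrArg Subtype.val (hpu ⟨w, hw⟩ ⟨w'.bypass, w'.bypass_isPath⟩)
  intro v hv
  exact hw' v (w'.support_bypass_subset (heq ▸ hv))

lemma exists_T_neighbor {T : Finset (Fin n)} (hT2 : 2 ≤ T.card)
    (hconn : (G.induce ↑T).Connected) {i : Fin n} (hi : i ∈ T) :
    ∃ t ∈ T, G.Adj i t := by
  obtain ⟨j, hj, hne⟩ := Finset.exists_mem_ne (s := T) (by omega) i
  obtain ⟨q⟩ := hconn.preconnected ⟨i, hi⟩ ⟨j, hj⟩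
  cases q with
  | nil => exact absurd rfl hne
  | @cons _ c _ h q' => exact ⟨c.1, c.2, h⟩

/-- There is no walk between two distinct neighbors of `i` avoiding `i` (in a tree). -/
lemma comps_disjoint (htree : G.IsTree) {qq i c x : Fin n} (hqi : G.Adj qq i)
    (hic : G.Adj i c) (hqc : qq ≠ c)
    (w1 : G.Walk qq x) (h1 : i ∉ w1.support) (w2 : G.Walk c x) (h2 : i ∉ w2.support) :
    False := by
  classical
  set w := w1.append w2.reverse with hwdef
  have hsup : i ∉ w.support := by
    intro hmem
    rcases (Walk.mem_support_append_iff _ _).mp hmem with h | h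
    · exact h1 h
    · rw [Walk.support_reverse] at h
      exact h2 (List.mem_reverse.mp h)
  have hb := w.bypass_isPath
  have hbs := w.support_bypass_subset
  have hpath2 : (Walk.cons hqi (Walk.cons hic Walk.nil) : G.Walk qq c).IsPath := by
    simp [Walk.isPath_def, hqi.ne, hqc, hic.ne]
  have hpu := SimpleGraph.isAcyclic_iff_path_unique.mp htree.IsAcyclic
  have heq : w.bypass = Walk.cons hqi (Walk.cons hic Walk.nil) :=
    congrArg Subtype.val (hpu ⟨w.bypass, hb⟩ ⟨_, hpath2⟩)
  have : i ∈ w.bypass.support := by rw [heq]; simp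
  exact hsup (hbs this)

/-- Gluing two paths hanging off the two sides of `q — i — c` into one path. -/
lemma glue_path (htree : G.IsTree) {qq i c d1 d2 : Fin n}
    (hqi : G.Adj qq i) (hic : G.Adj i c) (hqc : qq ≠ c)
    (p1 : G.Walk qq d1) (hp1 : p1.IsPath) (h1 : i ∉ p1.support)
    (p2 : G.Walk c d2) (hp2 : p2.IsPath) (h2 : i ∉ p2.support) :
    ∃ w : G.Walk d1 d2, w.IsPath ∧ qq ∈ w.support ∧ i ∈ w.support ∧ c ∈ w.support := by
  classical
  have hdisj : ∀ x, x ∈ p1.support → x ∈ p2.support → False := by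
    intro x hx1 hx2
    exact comps_disjoint htree hqi hic hqc
      (p1.takeUntil x hx1) (fun h => h1 (p1.support_takeUntil_subset hx1 h))
      (p2.takeUntil x hx2) (fun h => h2 (p2.support_takeUntil_subset hx2 h))
  refine ⟨p1.reverse.append (Walk.cons hqi (Walk.cons hic p2)), ?_, ?_, ?_, ?_⟩
  · refine Walk.IsPath.mk' ?_
    rw [Walk.support_append, Walk.support_cons, Walk.support_cons]
    simp only [List.tail_cons]
    rw [List.nodup_append]
    refine ⟨by rw [Walk.support_reverse]; exact List.nodup_reverse.mpr hp1.support_nodup, ?_, ?_⟩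
    · refine List.Nodup.cons ?_ hp2.support_nodup
      intro hmem
      exact h2 hmem
    · intro x hx y hx2 hxy
      subst hxy
      rw [Walk.support_reverse, List.mem_reverse] at hx
      rcases List.mem_cons.mp hx2 with rfl | hmem
      · exact h1 hx
      · exact hdisj x hx hmem
  · rw [Walk.mem_support_append_iff]
    exact Or.inl (by rw [Walk.support_reverse, List.mem_reverse]; exact p1.start_mem_support)
  · rw [Walk.mem_support_append_iff]
    exact Or.inr (by simp)
  · rw [Walk.mem_support_append_iff]
    exact Or.inr (by rw [Walk.support_cons, Walk.support_cons]; simp)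

end AuxTree

section AuxDelta

open SimpleGraph

variable {n : ℕ} {G : SimpleGraph (Fin n)} {D E : DAG (Fin n)} {Tset : Finset (Fin n)}

lemma adj_G_of_D (hD : D.skeleton = G) {a b : Fin n} (h : D.adj a b) : G.Adj a b := by
  rw [← hD]; exact Or.inl h

lemma D_or_D (hD : D.skeleton = G) {a b : Fin n} (h : G.Adj a b) :
    D.adj a b ∨ D.adj b a := by
  rw [← hD] at h; exact h

/-- Unflipped edges agree. -/
lemma hsame (hD : D.skeleton = G) (hE : E.skeleton = G)
    (hdiff : ∀ a b : Fin n, G.Adj a b → (¬ (D.adj a b ↔ E.adj a b) ↔ (a ∈ Tset ∧ b ∈ Tset)))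
    {a b : Fin n} (h : ¬ (a ∈ Tset ∧ b ∈ Tset)) : D.adj a b ↔ E.adj a b := by
  by_cases hadj : G.Adj a b
  · exact not_not.mp (fun hn => h ((hdiff a b hadj).mp hn))
  · constructor
    · intro h'; exact absurd (adj_G_of_D hD h') hadj
    · intro h'; exact absurd (adj_G_of_D hE h') hadj

/-- Edges inside `Tset` are flipped. -/
lemma hflip (hD : D.skeleton = G) (hE : E.skeleton = G)
    (hdiff : ∀ a b : Fin n, G.Adj a b → (¬ (D.adj a b ↔ E.adj a b) ↔ (a ∈ Tset ∧ b ∈ Tset)))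
    {a b : Fin n} (ha : a ∈ Tset) (hb : b ∈ Tset) (h : D.adj a b) : E.adj b a := by
  have hadj : G.Adj a b := adj_G_of_D hD h
  have hne := (hdiff a b hadj).mpr ⟨ha, hb⟩
  have hnE : ¬ E.adj a b := fun hE' => hne ⟨fun _ => hE', fun _ => h⟩
  rcases D_or_D hE hadj with h' | h'
  · exact absurd h' hnE
  · exact h'

lemma hflip' (hD : D.skeleton = G) (hE : E.skeleton = G)
    (hdiff : ∀ a b : Fin n, G.Adj a b → (¬ (D.adj a b ↔ E.adj a b) ↔ (a ∈ Tset ∧ b ∈ Tset)))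
    {a b : Fin n} (ha : a ∈ Tset) (hb : b ∈ Tset) (h : E.adj a b) : D.adj b a := by
  have hadj : G.Adj a b := adj_G_of_D hE h
  have hne := (hdiff a b hadj).mpr ⟨ha, hb⟩
  have hnD : ¬ D.adj a b := fun hD' => hne ⟨fun _ => h, fun _ => hD'⟩
  rcases D_or_D hD hadj with h' | h'
  · exact absurd h' hnD
  · exact h'

lemma mem_paIn {i t : Fin n} : t ∈ paIn D Tset i ↔ t ∈ Tset ∧ D.adj t i := Finset.mem_filter

lemma mem_chIn {i t : Fin n} : t ∈ chIn D Tset i ↔ t ∈ Tset ∧ D.adj i t := Finset.mem_filter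

/-- Every `E`-parent of `i ∈ Tset` is an outside `D`-parent or an in-`Tset` `D`-child. -/
lemma eparent_cases (hD : D.skeleton = G) (hE : E.skeleton = G)
    (hdiff : ∀ a b : Fin n, G.Adj a b → (¬ (D.adj a b ↔ E.adj a b) ↔ (a ∈ Tset ∧ b ∈ Tset)))
    {i y : Fin n} (hi : i ∈ Tset) (h : E.adj y i) :
    (D.adj y i ∧ y ∉ Tset) ∨ (D.adj i y ∧ y ∈ Tset) := by
  by_cases hyT : y ∈ Tset
  · right
    refine ⟨?_, hyT⟩
    rcases D_or_D hD (adj_G_of_D hE h) with h' | h'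
    · exact absurd (hflip hD hE hdiff hyT hi h') (fun h'' => E.asymm h h'')
    · exact h'
  · left
    exact ⟨(hsame hD hE hdiff (fun hc => hyT hc.1)).mpr h, hyT⟩

lemma imset_ne_iff {V : Type} (D E : DAG V) (S : Finset V) :
    D.imset S ≠ E.imset S ↔
      ¬ ((2 ≤ S.card ∧ ∃ i ∈ S, ∀ j ∈ S, j ≠ i → D.adj j i) ↔
         (2 ≤ S.card ∧ ∃ i ∈ S, ∀ j ∈ S, j ≠ i → E.adj j i)) := by
  unfold DAG.imset
  split_ifs with h1 h2 h2
  · exact iff_of_false (fun h => h rfl) (fun hn => hn (iff_of_true h1 h2))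
  · exact iff_of_true one_ne_zero (fun hn => h2 (hn.mp h1))
  · exact iff_of_true zero_ne_one (fun hn => h1 (hn.mpr h2))
  · exact iff_of_false (fun h => h rfl) (fun hn => hn (iff_of_false h1 h2))

/-- Sink evaluation on a 3-element Finset `{i,j,k}` with `j, k` neighbors of `i`. -/
lemma sink_triple (htree : G.IsTree) (hD : D.skeleton = G) {i j k : Fin n}
    (hij : G.Adj i j) (hik : G.Adj i k) (hjk : j ≠ k) :
    (∃ x ∈ ({i, j, k} : Finset (Fin n)), ∀ y ∈ ({i, j, k} : Finset (Fin n)), y ≠ x → D.adj y x)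
      ↔ (D.adj j i ∧ D.adj k i) := by
  constructor
  · rintro ⟨x, hx, hall⟩
    simp only [Finset.mem_insert, Finset.mem_singleton] at hx
    rcases hx with rfl | rfl | rfl
    · exact ⟨hall j (by simp) hij.ne', hall k (by simp) hik.ne'⟩
    · exfalso
      have h1 : D.adj k x := hall k (by simp) hjk.symm
      exact no_triangle htree.IsAcyclic hij.symm hik.symm hjk (adj_G_of_D hD h1).symm
    · exfalso
      have h1 : D.adj j x := hall j (by simp) hjk
      exact no_triangle htree.IsAcyclic hij.symm hik.symm hjk (adj_G_of_D hD h1)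
  · rintro ⟨h1, h2⟩
    refine ⟨i, by simp, ?_⟩
    intro y hy hne
    simp only [Finset.mem_insert, Finset.mem_singleton] at hy
    rcases hy with rfl | rfl | rfl
    · exact absurd rfl hne
    · exact h1
    · exact h2

lemma adj_of_mem_S (hD : D.skeleton = G) {i : Fin n} {S : Finset (Fin n)}
    (hsub : (↑S : Set (Fin n)) ⊆ insert i (D.skeleton.neighborSet i))
    {y : Fin n} (hy : y ∈ S) (hne : y ≠ i) : G.Adj i y := by
  rcases Set.mem_insert_iff.mp (hsub (Finset.mem_coe.mpr hy)) with h | h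
  · exact absurd h hne
  · rw [← hD]; exact h

lemma sink_iff_center (htree : G.IsTree) (hD : D.skeleton = G) {i : Fin n} {S : Finset (Fin n)}
    (hiS : i ∈ S) (hsub : (↑S : Set (Fin n)) ⊆ insert i (D.skeleton.neighborSet i))
    (hcard : 3 ≤ S.card) :
    (∃ x ∈ S, ∀ y ∈ S, y ≠ x → D.adj y x) ↔ (∀ y ∈ S, y ≠ i → D.adj y i) := by
  constructor
  · rintro ⟨x, hx, hall⟩
    by_cases hxi : x = i
    · subst hxi; exact hall
    · exfalso
      have hGix : G.Adj i x := adj_of_mem_S hD hsub hx hxi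
      have hz : ∃ z ∈ (S.erase x).erase i, True := by
        have h1 : i ∈ S.erase x := Finset.mem_erase.mpr ⟨fun e => hxi e.symm, hiS⟩
        have h2 : 1 ≤ ((S.erase x).erase i).card := by
          rw [Finset.card_erase_of_mem h1, Finset.card_erase_of_mem hx]
          omega
        obtain ⟨z, hz⟩ := Finset.card_pos.mp (show 0 < ((S.erase x).erase i).card by omega)
        exact ⟨z, hz, trivial⟩
      obtain ⟨z, hz, -⟩ := hz
      have hzi : z ≠ i := (Finset.mem_erase.mp hz).1
      have hzx : z ≠ x := (Finset.mem_erase.mp (Finset.mem_erase.mp hz).2).1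
      have hzS : z ∈ S := (Finset.mem_erase.mp (Finset.mem_erase.mp hz).2).2
      have hGiz : G.Adj i z := adj_of_mem_S hD hsub hzS hzi
      have := hall z hzS hzx
      exact no_triangle htree.IsAcyclic hGiz.symm hGix.symm hzx (adj_G_of_D hD this)
  · intro h
    exact ⟨i, hiS, h⟩

lemma card3 {a b c : Fin n} (h1 : a ≠ b) (h2 : a ≠ c) (h3 : b ≠ c) :
    ({a, b, c} : Finset (Fin n)).card = 3 :=
  Finset.card_eq_three.mpr ⟨a, b, c, h1, h2, h3, rfl⟩

lemma sub3 (hD : D.skeleton = G) {i j k : Fin n} (hij : G.Adj i j) (hik : G.Adj i k) :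
    (↑({i, j, k} : Finset (Fin n)) : Set (Fin n)) ⊆ insert i (D.skeleton.neighborSet i) := by
  intro v hv
  simp only [Finset.coe_insert, Finset.coe_singleton, Set.mem_insert_iff,
    Set.mem_singleton_iff] at hv
  rcases hv with rfl | rfl | rfl
  · exact Set.mem_insert _ _
  · exact Set.mem_insert_of_mem _ (by rw [SimpleGraph.mem_neighborSet, hD]; exact hij)
  · exact Set.mem_insert_of_mem _ (by rw [SimpleGraph.mem_neighborSet, hD]; exact hik)

/-- Characterization of the delta set. -/
lemma delta_char (htree : G.IsTree) (hD : D.skeleton = G) (hE : E.skeleton = G)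
    (hT2 : 2 ≤ Tset.card) (hconn : (G.induce ↑Tset).Connected)
    (hdiff : ∀ a b : Fin n, G.Adj a b → (¬ (D.adj a b ↔ E.adj a b) ↔ (a ∈ Tset ∧ b ∈ Tset)))
    (i : Fin n) :
    i ∈ deltaSet D E ↔ i ∈ Tset ∧
      ((∃ o, D.adj o i ∧ o ∉ Tset) ∨ 2 ≤ (paIn D Tset i).card ∨ 2 ≤ (chIn D Tset i).card) := by
  constructor
  · rintro ⟨S, hiS, hsub, hcard, hne⟩
    rw [imset_ne_iff] at hne
    have hsubE : (↑S : Set (Fin n)) ⊆ insert i (E.skeleton.neighborSet i) := by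
      rw [hE, ← hD]; exact hsub
    rw [sink_iff_center htree hD hiS hsub hcard,
      sink_iff_center htree hE hiS hsubE hcard] at hne
    by_cases hiT : i ∈ Tset
    · refine ⟨hiT, ?_⟩
      by_contra hno
      push_neg at hno
      obtain ⟨hnoO, hnoP, hnoC⟩ := hno
      -- two distinct elements of S ∖ {i}
      have hcard' : 1 < (S.erase i).card := by
        rw [Finset.card_erase_of_mem hiS]; omega
      obtain ⟨y₁, hy₁, y₂, hy₂, hy12⟩ := Finset.one_lt_card.mp hcard'
      have hy₁i : y₁ ≠ i := (Finset.mem_erase.mp hy₁).1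
      have hy₂i : y₂ ≠ i := (Finset.mem_erase.mp hy₂).1
      have hy₁S : y₁ ∈ S := (Finset.mem_erase.mp hy₁).2
      have hy₂S : y₂ ∈ S := (Finset.mem_erase.mp hy₂).2
      have hDfalse : ¬ (2 ≤ S.card ∧ ∀ y ∈ S, y ≠ i → D.adj y i) := by
        rintro ⟨-, hall⟩
        have hm : ∀ y ∈ S, y ≠ i → y ∈ paIn D Tset i := by
          intro y hy hyne
          exact mem_paIn.mpr ⟨hnoO y (hall y hy hyne), hall y hy hyne⟩
        have : 1 < (paIn D Tset i).card :=
          Finset.one_lt_card.mpr ⟨y₁, hm y₁ hy₁S hy₁i, y₂, hm y₂ hy₂S hy₂i, hy12⟩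
        omega
      have hEfalse : ¬ (2 ≤ S.card ∧ ∀ y ∈ S, y ≠ i → E.adj y i) := by
        rintro ⟨-, hall⟩
        have hm : ∀ y ∈ S, y ≠ i → y ∈ chIn D Tset i := by
          intro y hy hyne
          rcases eparent_cases hD hE hdiff hiT (hall y hy hyne) with ⟨h1, h2⟩ | ⟨h1, h2⟩
          · exact absurd (hnoO y h1) h2
          · exact mem_chIn.mpr ⟨h2, h1⟩
        have : 1 < (chIn D Tset i).card :=
          Finset.one_lt_card.mpr ⟨y₁, hm y₁ hy₁S hy₁i, y₂, hm y₂ hy₂S hy₂i, hy12⟩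
        omega
      exact hne ⟨fun h => (hDfalse h).elim, fun h => (hEfalse h).elim⟩
    · exfalso
      apply hne
      have hpt : ∀ y, y ≠ i → (D.adj y i ↔ E.adj y i) := by
        intro y hyne
        exact hsame hD hE hdiff (fun hc => hiT hc.2)
      constructor
      · rintro ⟨h2, hall⟩
        exact ⟨h2, fun y hy hyne => (hpt y hyne).mp (hall y hy hyne)⟩
      · rintro ⟨h2, hall⟩
        exact ⟨h2, fun y hy hyne => (hpt y hyne).mpr (hall y hy hyne)⟩
  · rintro ⟨hiT, hcase⟩
    have two_le_card3 : ∀ {a b c : Fin n}, a ≠ b → a ≠ c → b ≠ c →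
        2 ≤ ({a, b, c} : Finset (Fin n)).card := by
      intro a b c h1 h2 h3; rw [card3 h1 h2 h3]; norm_num
    rcases hcase with ⟨o, ho, hoT⟩ | hP | hC
    · obtain ⟨t, htT, hit⟩ := exists_T_neighbor hT2 hconn hiT
      have hoi : o ≠ i := fun e => D.irr (e ▸ ho)
      have hot : o ≠ t := fun e => hoT (e ▸ htT)
      have hGio : G.Adj i o := (adj_G_of_D hD ho).symm
      refine ⟨{i, o, t}, by simp, sub3 hD hGio hit,
        le_of_eq (card3 hoi.symm hit.ne hot).symm, ?_⟩
      rw [imset_ne_iff, sink_triple htree hD hGio hit hot,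
        sink_triple htree hE hGio hit hot]
      intro hiff
      rcases D_or_D hD hit with hit' | hti'
      · have hEo : E.adj o i := (hsame hD hE hdiff (fun hc => hoT hc.1)).mp ho
        have hEt : E.adj t i := hflip hD hE hdiff hiT htT hit'
        have := (hiff.mpr ⟨two_le_card3 hoi.symm hit.ne hot, hEo, hEt⟩).2.2
        exact D.asymm hit' this
      · have := (hiff.mp ⟨two_le_card3 hoi.symm hit.ne hot, ho, hti'⟩).2.2
        exact E.asymm (hflip hD hE hdiff htT hiT hti') this
    · obtain ⟨j, hj, k, hk, hjk⟩ :=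
        Finset.one_lt_card.mp (show 1 < (paIn D Tset i).card by omega)
      obtain ⟨hjT, hji⟩ := mem_paIn.mp hj
      obtain ⟨hkT, hki⟩ := mem_paIn.mp hk
      have hGij : G.Adj i j := (adj_G_of_D hD hji).symm
      have hGik : G.Adj i k := (adj_G_of_D hD hki).symm
      refine ⟨{i, j, k}, by simp, sub3 hD hGij hGik,
        le_of_eq (card3 hGij.ne hGik.ne hjk).symm, ?_⟩
      rw [imset_ne_iff, sink_triple htree hD hGij hGik hjk,
        sink_triple htree hE hGij hGik hjk]
      intro hiff
      have := (hiff.mp ⟨two_le_card3 hGij.ne hGik.ne hjk, hji, hki⟩).2.1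
      exact E.asymm (hflip hD hE hdiff hjT hiT hji) this
    · obtain ⟨j, hj, k, hk, hjk⟩ :=
        Finset.one_lt_card.mp (show 1 < (chIn D Tset i).card by omega)
      obtain ⟨hjT, hij⟩ := mem_chIn.mp hj
      obtain ⟨hkT, hik⟩ := mem_chIn.mp hk
      have hGij : G.Adj i j := adj_G_of_D hD hij
      have hGik : G.Adj i k := adj_G_of_D hD hik
      refine ⟨{i, j, k}, by simp, sub3 hD hGij hGik,
        le_of_eq (card3 hGij.ne hGik.ne hjk).symm, ?_⟩
      rw [imset_ne_iff, sink_triple htree hD hGij hGik hjk,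
        sink_triple htree hE hGij hGik hjk]
      intro hiff
      have hEj : E.adj j i := hflip hD hE hdiff hiT hjT hij
      have hEk : E.adj k i := hflip hD hE hdiff hiT hkT hik
      have := (hiff.mpr ⟨two_le_card3 hGij.ne hGik.ne hjk, hEj, hEk⟩).2.1
      exact D.asymm hij this

end AuxDelta

section AuxSpan

open SimpleGraph

variable {n : ℕ} {G : SimpleGraph (Fin n)} {D E : DAG (Fin n)} {Tset : Finset (Fin n)}

lemma mem_span_self {A : Set (Fin n)} {d : Fin n} (h : d ∈ A) : d ∈ treeSpan G A :=
  ⟨d, h, d, h, Walk.nil, by simp [Walk.isPath_def], by simp⟩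

lemma span_sub (htree : G.IsTree) (hconn : (G.induce ↑Tset).Connected)
    {A : Set (Fin n)} (hA : A ⊆ ↑Tset) {v : Fin n} (hv : v ∈ treeSpan G A) : v ∈ Tset := by
  obtain ⟨a, ha, b, hb, w, hw, hmem⟩ := hv
  exact path_in_T htree hconn (hA ha) (hA hb) w hw v hmem

lemma span_adj_reaches (htree : G.IsTree) (hconn : (G.induce ↑Tset).Connected)
    {A : Set (Fin n)} (hA : A ⊆ ↑Tset) {a b : Fin n}
    (ha : a ∈ treeSpan G A) (hadj : G.Adj a b) :
    ReachesAvoiding G Tset b a A := by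
  classical
  obtain ⟨d1, hd1, d2, hd2, w, hw, hmem⟩ := ha
  have hsupT : ∀ v ∈ w.support, v ∈ Tset := path_in_T htree hconn (hA hd1) (hA hd2) w hw
  by_cases hb1 : b ∈ (w.takeUntil a hmem).support
  · refine ⟨d2, hd2, w.dropUntil a hmem,
      fun v hv => ⟨hsupT v (w.support_dropUntil_subset hmem hv), ?_⟩⟩
    rintro rfl
    have hba : v ≠ a := hadj.ne'
    have hnodup := hw.support_nodup
    rw [← Walk.take_spec w hmem, Walk.support_append] at hnodup
    have hdisj := List.disjoint_of_nodup_append hnodup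
    have hbtail : v ∈ (w.dropUntil a hmem).support.tail := by
      have hcons := Walk.support_eq_cons (w.dropUntil a hmem)
      rw [hcons] at hv
      rcases List.mem_cons.mp hv with h | h
      · exact absurd h hba
      · exact h
    exact hdisj hb1 hbtail
  · refine ⟨d1, hd1, (w.takeUntil a hmem).reverse, fun v hv => ?_⟩
    rw [Walk.support_reverse, List.mem_reverse] at hv
    exact ⟨hsupT v (w.support_takeUntil_subset hmem hv), fun e => hb1 (e ▸ hv)⟩

lemma reaches_tail {A : Set (Fin n)} {α β w' : Fin n}
    (h : ReachesAvoiding G Tset α β A) (hβ : β ∉ A)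
    (hnb : ∀ t ∈ Tset, G.Adj β t → t ≠ α → t = w') :
    ReachesAvoiding G Tset β w' A := by
  classical
  obtain ⟨d, hd, wk, hwk⟩ := h
  have hprops : ∀ v ∈ wk.bypass.support, v ∈ Tset ∧ v ≠ α :=
    fun v hv => hwk v (wk.support_bypass_subset hv)
  have hpath := wk.bypass_isPath
  have hβd : β ≠ d := fun e => hβ (e ▸ hd)
  obtain ⟨t, hadj, q, hq⟩ := Walk.exists_eq_cons_of_ne hβd wk.bypass
  have ht := hprops t (by rw [hq]; simp)
  have htw : t = w' := hnb t ht.1 hadj ht.2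
  subst htw
  have hβq : β ∉ q.support := by
    rw [hq, Walk.cons_isPath_iff] at hpath
    exact hpath.2
  exact ⟨d, hd, q, fun v hv =>
    ⟨(hprops v (by rw [hq]; simp [hv])).1, fun e => hβq (e ▸ hv)⟩⟩

lemma reaches_self {A : Set (Fin n)} {α β : Fin n}
    (h : ReachesAvoiding G Tset α β A)
    (hnb : ∀ t ∈ Tset, G.Adj β t → t = α) : β ∈ A := by
  obtain ⟨d, hd, wk, hwk⟩ := h
  by_cases hβd : β = d
  · exact hβd ▸ hd
  · obtain ⟨t, hadj, q, hq⟩ := Walk.exists_eq_cons_of_ne hβd wk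
    have ht := hwk t (by rw [hq]; simp)
    exact absurd (hnb t ht.1 hadj) ht.2

lemma reaches_to_path {A : Set (Fin n)} {i x : Fin n}
    (h : ReachesAvoiding G Tset i x A) :
    ∃ d ∈ A, ∃ w : G.Walk x d, w.IsPath ∧ (∀ v ∈ w.support, v ∈ Tset) ∧ i ∉ w.support := by
  classical
  obtain ⟨d, hd, wk, hwk⟩ := h
  exact ⟨d, hd, wk.bypass, wk.bypass_isPath,
    fun v hv => (hwk v (wk.support_bypass_subset hv)).1,
    fun hmem => (hwk i (wk.support_bypass_subset hmem)).2 rfl⟩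

end AuxSpan

section AuxBack

open SimpleGraph

variable {n : ℕ} {G : SimpleGraph (Fin n)} {D E : DAG (Fin n)} {Tset : Finset (Fin n)}

/-- The local conditions: RHS of the main theorem. -/
def LocalConds (G : SimpleGraph (Fin n)) (D E : DAG (Fin n)) (Tset : Finset (Fin n)) : Prop :=
  ∀ i ∈ Tset, 2 ≤ (Tset.filter (fun j => G.Adj i j)).card →
    (2 ≤ (paIn D Tset i).card → (chIn D Tset i).card = 1 →
      (∃ q, D.adj q i ∧ q ∉ Tset) ∨
        ∀ c ∈ chIn D Tset i,
          (∃ a b, D.IsVStructure a c b) → ∃ y, E.Essential y c) ∧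
    ((paIn D Tset i).card = 1 → 2 ≤ (chIn D Tset i).card →
      (∃ q, D.adj q i ∧ q ∉ Tset) ∨
        ∀ q ∈ paIn D Tset i,
          (∃ a b, E.IsVStructure a q b) → ∃ y, D.Essential y q) ∧
    ((paIn D Tset i).card = 1 → (chIn D Tset i).card = 1 →
      (∀ q ∈ paIn D Tset i, ReachesAvoiding G Tset i q (deltaSet D E)) →
      (∀ c ∈ chIn D Tset i, ReachesAvoiding G Tset i c (deltaSet D E)) →
      (∃ q, D.adj q i ∧ q ∉ Tset) ∨
        ((∀ c ∈ chIn D Tset i, ∃ y, E.Essential y c) ∧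
         (∀ q ∈ paIn D Tset i, ∃ y, D.Essential y q)))

lemma vstr_of_twoPar (htree : G.IsTree) (hD : D.skeleton = G) {u : Fin n}
    (h2 : TwoPar D u) : ∃ a b, D.IsVStructure a u b := by
  obtain ⟨x, y, hxy, hx, hy⟩ := h2
  have hnadj : ¬ G.Adj x y :=
    no_triangle htree.IsAcyclic (adj_G_of_D hD hx) (adj_G_of_D hD hy) hxy
  exact ⟨x, y, hxy, hx, hy, fun h => hnadj (adj_G_of_D hD h),
    fun h => hnadj (adj_G_of_D hD h).symm⟩

lemma exists_essential_parent {D : DAG (Fin n)} (hTF : TF D) {z c : Fin n}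
    (h2 : TwoPar D z) (h : z = c ∨ Relation.TransGen D.adj z c) : ∃ y, D.Essential y c := by
  rcases h with rfl | h
  · obtain ⟨x, y, hxy, hx, hy⟩ := h2
    exact ⟨x, fcd_essential hTF ⟨hx, z, ⟨x, y, hxy, hx, hy⟩, Or.inl rfl⟩⟩
  · obtain ⟨m, hm1, hm2⟩ := Relation.TransGen.tail'_iff.mp h
    exact ⟨m, fcd_essential hTF ⟨hm2, z, h2, Or.inr hm1⟩⟩

lemma ep_of_fcd {D : DAG (Fin n)} (hTF : TF D) {q i : Fin n}
    (h : Fcd D q i) (hni : ¬ TwoPar D i) : ∃ y, D.Essential y q := by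
  obtain ⟨hadj, z, h2, hz⟩ := h
  rcases hz with rfl | hz
  · exact absurd h2 hni
  · rcases Relation.reflTransGen_iff_eq_or_transGen.mp hz with h' | h'
    · exact exists_essential_parent hTF h2 (Or.inl h'.symm)
    · exact exists_essential_parent hTF h2 (Or.inr h')

lemma not_twoPar_D {i : Fin n} (hcard : (paIn D Tset i).card ≤ 1)
    (hno : ∀ o, D.adj o i → o ∈ Tset) : ¬ TwoPar D i := by
  rintro ⟨x, y, hxy, hx, hy⟩
  exact hxy (Finset.card_le_one.mp hcard x (mem_paIn.mpr ⟨hno x hx, hx⟩)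
    y (mem_paIn.mpr ⟨hno y hy, hy⟩))

lemma not_twoPar_E (hD : D.skeleton = G) (hE : E.skeleton = G)
    (hdiff : ∀ a b : Fin n, G.Adj a b → (¬ (D.adj a b ↔ E.adj a b) ↔ (a ∈ Tset ∧ b ∈ Tset)))
    {i : Fin n} (hi : i ∈ Tset) (hcard : (chIn D Tset i).card ≤ 1)
    (hno : ∀ o, D.adj o i → o ∈ Tset) : ¬ TwoPar E i := by
  rintro ⟨x, y, hxy, hx, hy⟩
  have hm : ∀ z, E.adj z i → z ∈ chIn D Tset i := by
    intro z hz
    rcases eparent_cases hD hE hdiff hi hz with ⟨h1, h2⟩ | ⟨h1, h2⟩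
    · exact absurd (hno z h1) h2
    · exact mem_chIn.mpr ⟨h2, h1⟩
  exact hxy (Finset.card_le_one.mp hcard x (hm x hx) y (hm y hy))

lemma delta_of_twoPar (htree : G.IsTree) (hD : D.skeleton = G) (hE : E.skeleton = G)
    (hT2 : 2 ≤ Tset.card) (hconn : (G.induce ↑Tset).Connected)
    (hdiff : ∀ a b : Fin n, G.Adj a b → (¬ (D.adj a b ↔ E.adj a b) ↔ (a ∈ Tset ∧ b ∈ Tset)))
    {c : Fin n} (hcT : c ∈ Tset) (h2 : TwoPar D c) : c ∈ deltaSet D E := by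
  rw [delta_char htree hD hE hT2 hconn hdiff]
  refine ⟨hcT, ?_⟩
  obtain ⟨x, y, hxy, hx, hy⟩ := h2
  by_cases hxT : x ∈ Tset
  · by_cases hyT : y ∈ Tset
    · exact Or.inr (Or.inl (Finset.one_lt_card.mpr
        ⟨x, mem_paIn.mpr ⟨hxT, hx⟩, y, mem_paIn.mpr ⟨hyT, hy⟩, hxy⟩))
    · exact Or.inl ⟨y, hy, hyT⟩
  · exact Or.inl ⟨x, hx, hxT⟩

lemma delta_of_twoParE (htree : G.IsTree) (hD : D.skeleton = G) (hE : E.skeleton = G)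
    (hT2 : 2 ≤ Tset.card) (hconn : (G.induce ↑Tset).Connected)
    (hdiff : ∀ a b : Fin n, G.Adj a b → (¬ (D.adj a b ↔ E.adj a b) ↔ (a ∈ Tset ∧ b ∈ Tset)))
    {c : Fin n} (hcT : c ∈ Tset) (h2 : TwoPar E c) : c ∈ deltaSet D E := by
  rw [delta_char htree hD hE hT2 hconn hdiff]
  refine ⟨hcT, ?_⟩
  obtain ⟨x, y, hxy, hx, hy⟩ := h2
  rcases eparent_cases hD hE hdiff hcT hx with ⟨h1x, h2x⟩ | ⟨h1x, h2x⟩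
  · exact Or.inl ⟨x, h1x, h2x⟩
  · rcases eparent_cases hD hE hdiff hcT hy with ⟨h1y, h2y⟩ | ⟨h1y, h2y⟩
    · exact Or.inl ⟨y, h1y, h2y⟩
    · exact Or.inr (Or.inr (Finset.one_lt_card.mpr
        ⟨x, mem_chIn.mpr ⟨h2x, h1x⟩, y, mem_chIn.mpr ⟨h2y, h1y⟩, hxy⟩))

/-- The backward direction, main lemma: local conditions force the arrow `u → v`. -/
lemma back_main (htree : G.IsTree) (hD : D.skeleton = G) (hE : E.skeleton = G)
    (hT2 : 2 ≤ Tset.card) (hconn : (G.induce ↑Tset).Connected)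
    (hdiff : ∀ a b : Fin n, G.Adj a b → (¬ (D.adj a b ↔ E.adj a b) ↔ (a ∈ Tset ∧ b ∈ Tset)))
    (hcond : LocalConds G D E Tset)
    {u v : Fin n} (huT : u ∈ Tset) (hvT : v ∈ Tset) (huv : D.adj u v)
    (ha : ReachesAvoiding G Tset v u (deltaSet D E))
    (hb : ReachesAvoiding G Tset u v (deltaSet D E)) :
    Fcd D u v := by
  classical
  have hTF : TF D := tf_of_tree hD htree.IsAcyclic
  have hacyc : D.skeleton.IsAcyclic := by rw [hD]; exact htree.IsAcyclic
  have hGuv : G.Adj u v := adj_G_of_D hD huv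
  by_cases h2u : TwoPar D u
  · exact ⟨huv, u, h2u, Or.inr Relation.ReflTransGen.refl⟩
  by_cases h2v : TwoPar D v
  · exact ⟨huv, v, h2v, Or.inl rfl⟩
  have hnbr : ∀ (x t : Fin n), t ∈ Tset → G.Adj x t →
      t ∈ paIn D Tset x ∨ t ∈ chIn D Tset x := by
    intro x t htT hadj
    rcases D_or_D hD hadj with h | h
    · exact Or.inr (mem_chIn.mpr ⟨htT, h⟩)
    · exact Or.inl (mem_paIn.mpr ⟨htT, h⟩)
  have hvCU : v ∈ chIn D Tset u := mem_chIn.mpr ⟨hvT, huv⟩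
  have hpv : ∀ y, D.adj y v → y = u := fun y hy =>
    Classical.byContradiction (fun hne => h2v ⟨y, u, hne, hy, huv⟩)
  have hpav : paIn D Tset v = {u} :=
    Finset.eq_singleton_iff_unique_mem.mpr
      ⟨mem_paIn.mpr ⟨huT, huv⟩, fun y hy => hpv y (mem_paIn.mp hy).2⟩
  have finish : (∃ y, D.Essential y u) → Fcd D u v := by
    rintro ⟨y, hy⟩
    obtain ⟨hyu, z, h2z, hz⟩ := (essential_iff_fcd hTF hacyc).mp hy
    refine ⟨huv, z, h2z, Or.inr ?_⟩
    rcases hz with rfl | hz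
    · exact Relation.ReflTransGen.refl
    · exact hz.tail hyu
  have finishq : ∀ q, D.adj q u → (∃ y, D.Essential y q) → Fcd D u v := by
    rintro q hqu ⟨y, hy⟩
    obtain ⟨hyq, z, h2z, hz⟩ := (essential_iff_fcd hTF hacyc).mp hy
    refine ⟨huv, z, h2z, Or.inr ?_⟩
    rcases hz with rfl | hz
    · exact Relation.ReflTransGen.single hqu
    · exact (hz.tail hyq).tail hqu
  by_cases hB : TwoPar E u
  · -- v-side argument
    by_cases hCv2 : 2 ≤ (chIn D Tset v).card
    · have hint : 2 ≤ (Tset.filter (fun j => G.Adj v j)).card := by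
        refine le_trans hCv2 (Finset.card_le_card ?_)
        intro t ht
        obtain ⟨h1, h2⟩ := mem_chIn.mp ht
        exact Finset.mem_filter.mpr ⟨h1, adj_G_of_D hD h2⟩
      rcases (hcond v hvT hint).2.1 (by rw [hpav]; simp) hCv2 with ⟨o, ho, hoT⟩ | hcnd
      · exact absurd ⟨o, u, fun e => hoT (e ▸ huT), ho, huv⟩ h2v
      · exact finish (hcnd u (by rw [hpav]; simp) (vstr_of_twoPar htree hE hB))
    · by_cases hw : ∃ ww, ww ∈ chIn D Tset v
      · obtain ⟨ww, hww⟩ := hw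
        have hchv : chIn D Tset v = {ww} :=
          Finset.eq_singleton_iff_unique_mem.mpr
            ⟨hww, fun t ht => Finset.card_le_one.mp (by omega) t ht ww hww⟩
        have hvnΔ : v ∉ deltaSet D E := by
          rw [delta_char htree hD hE hT2 hconn hdiff]
          rintro ⟨-, ⟨o, ho, hoT⟩ | hP | hC⟩
          · exact hoT ((hpv o ho) ▸ huT)
          · rw [hpav] at hP; simp at hP
          · rw [hchv] at hC; simp at hC
        have hint : 2 ≤ (Tset.filter (fun j => G.Adj v j)).card := by
          have huvm : u ∈ Tset.filter (fun j => G.Adj v j) :=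
            Finset.mem_filter.mpr ⟨huT, hGuv.symm⟩
          have hwm : ww ∈ Tset.filter (fun j => G.Adj v j) := by
            obtain ⟨h1, h2⟩ := mem_chIn.mp hww
            exact Finset.mem_filter.mpr ⟨h1, adj_G_of_D hD h2⟩
          exact Finset.one_lt_card.mpr ⟨u, huvm, ww, hwm,
            fun e => D.asymm huv (e ▸ (mem_chIn.mp hww).2)⟩
        have hrc : ∀ c ∈ chIn D Tset v, ReachesAvoiding G Tset v c (deltaSet D E) := by
          intro c hc
          have hcw : c = ww := by rw [hchv] at hc; simpa using hc
          subst hcw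
          refine reaches_tail hb hvnΔ ?_
          intro t htT hadj htne
          rcases hnbr v t htT hadj with h | h
          · rw [hpav] at h; simp at h; exact absurd h htne
          · rw [hchv] at h; simpa using h
        have hra : ∀ q ∈ paIn D Tset v, ReachesAvoiding G Tset v q (deltaSet D E) := by
          intro q hq
          have hqu : q = u := by rw [hpav] at hq; simpa using hq
          subst hqu; exact ha
        rcases (hcond v hvT hint).2.2 (by rw [hpav]; simp) (by rw [hchv]; simp) hra hrc with
          ⟨o, ho, hoT⟩ | ⟨-, hq2⟩
        · exact absurd ⟨o, u, fun e => hoT (e ▸ huT), ho, huv⟩ h2v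
        · exact finish (hq2 u (by rw [hpav]; simp))
      · exfalso
        have hvΔ : v ∈ deltaSet D E := by
          refine reaches_self hb ?_
          intro t htT hadj
          rcases hnbr v t htT hadj with h | h
          · rw [hpav] at h; simpa using h
          · exact absurd ⟨t, h⟩ hw
        rw [delta_char htree hD hE hT2 hconn hdiff] at hvΔ
        rcases hvΔ with ⟨-, ⟨o, ho, hoT⟩ | hP | hC⟩
        · exact hoT ((hpv o ho) ▸ huT)
        · rw [hpav] at hP; simp at hP
        · obtain ⟨t, ht, t2, ht2, hne⟩ := Finset.one_lt_card.mp hC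
          exact hw ⟨t, ht⟩
  · -- u-side argument
    have hCU : ∀ t ∈ chIn D Tset u, t = v := by
      intro t ht
      by_contra htv
      obtain ⟨htT, hut⟩ := mem_chIn.mp ht
      exact hB ⟨t, v, htv, hflip hD hE hdiff huT htT hut, hflip hD hE hdiff huT hvT huv⟩
    have hO : ∀ o, D.adj o u → o ∈ Tset := by
      intro o ho
      by_contra hoT
      have hEou : E.adj o u := (hsame hD hE hdiff (fun hc => hoT hc.1)).mp ho
      exact hB ⟨o, v, fun e => hoT (e ▸ hvT), hEou, hflip hD hE hdiff huT hvT huv⟩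
    by_cases hq : ∃ qq, qq ∈ paIn D Tset u
    · obtain ⟨qq, hqqm⟩ := hq
      obtain ⟨hqqT, hqqu⟩ := mem_paIn.mp hqqm
      have hpau : paIn D Tset u = {qq} := by
        apply Finset.eq_singleton_iff_unique_mem.mpr
        refine ⟨hqqm, fun t ht => ?_⟩
        by_contra htq
        exact h2u ⟨t, qq, htq, (mem_paIn.mp ht).2, hqqu⟩
      have hchu : chIn D Tset u = {v} :=
        Finset.eq_singleton_iff_unique_mem.mpr ⟨hvCU, hCU⟩
      have hunΔ : u ∉ deltaSet D E := by
        rw [delta_char htree hD hE hT2 hconn hdiff]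
        rintro ⟨-, ⟨o, ho, hoT⟩ | hP | hC⟩
        · exact hoT (hO o ho)
        · rw [hpau] at hP; simp at hP
        · rw [hchu] at hC; simp at hC
      have hqv : qq ≠ v := fun e => D.asymm huv (e ▸ hqqu)
      have hint : 2 ≤ (Tset.filter (fun j => G.Adj u j)).card := by
        have h1 : qq ∈ Tset.filter (fun j => G.Adj u j) :=
          Finset.mem_filter.mpr ⟨hqqT, (adj_G_of_D hD hqqu).symm⟩
        have h2 : v ∈ Tset.filter (fun j => G.Adj u j) :=
          Finset.mem_filter.mpr ⟨hvT, hGuv⟩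
        exact Finset.one_lt_card.mpr ⟨qq, h1, v, h2, hqv⟩
      have hra : ∀ q' ∈ paIn D Tset u, ReachesAvoiding G Tset u q' (deltaSet D E) := by
        intro q' hq'
        have hq'q : q' = qq := by rw [hpau] at hq'; simpa using hq'
        subst hq'q
        refine reaches_tail ha hunΔ ?_
        intro t htT hadj htne
        rcases hnbr u t htT hadj with h | h
        · rw [hpau] at h; simpa using h
        · have := hCU t h; exact absurd this htne
      have hrc : ∀ c ∈ chIn D Tset u, ReachesAvoiding G Tset u c (deltaSet D E) := by
        intro c hc
        have hcv : c = v := hCU c hc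
        subst hcv; exact hb
      rcases (hcond u huT hint).2.2 (by rw [hpau]; simp) (by rw [hchu]; simp) hra hrc with
        ⟨o, ho, hoT⟩ | ⟨-, hqc⟩
      · exact absurd (hO o ho) hoT
      · exact finishq qq hqqu (hqc qq (by rw [hpau]; simp))
    · exfalso
      have huΔ : u ∈ deltaSet D E := by
        refine reaches_self ha ?_
        intro t htT hadj
        rcases hnbr u t htT hadj with h | h
        · exact absurd ⟨t, h⟩ hq
        · exact hCU t h
      rw [delta_char htree hD hE hT2 hconn hdiff] at huΔ
      rcases huΔ with ⟨-, ⟨o, ho, hoT⟩ | hP | hC⟩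
      · exact hoT (hO o ho)
      · obtain ⟨t, ht, t2, ht2, hne⟩ := Finset.one_lt_card.mp hP
        exact hq ⟨t, ht⟩
      · obtain ⟨t, ht, t2, ht2, hne⟩ := Finset.one_lt_card.mp hC
        exact hne ((hCU t ht).trans (hCU t2 ht2).symm)

end AuxBack

section AuxForward

open SimpleGraph

variable {n : ℕ} {G : SimpleGraph (Fin n)} {D E : DAG (Fin n)} {Tset : Finset (Fin n)}

lemma not_markovEquiv (htree : G.IsTree) (hD : D.skeleton = G) (hE : E.skeleton = G)
    (hT2 : 2 ≤ Tset.card) (hconn : (G.induce ↑Tset).Connected)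
    (hdiff : ∀ a b : Fin n, G.Adj a b → (¬ (D.adj a b ↔ E.adj a b) ↔ (a ∈ Tset ∧ b ∈ Tset)))
    (hdelta : (deltaSet D E).Nonempty) : ¬ MarkovEquiv D E := by
  rintro ⟨hskel, hvs⟩
  obtain ⟨δ, hδ⟩ := hdelta
  rw [delta_char htree hD hE hT2 hconn hdiff] at hδ
  obtain ⟨hδT, hcase⟩ := hδ
  rcases hcase with ⟨o, ho, hoT⟩ | hP | hC
  · obtain ⟨t, htT, hδt⟩ := exists_T_neighbor hT2 hconn hδT
    have hot : o ≠ t := fun e => hoT (e ▸ htT)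
    have hnadj : ¬ G.Adj o t :=
      no_triangle htree.IsAcyclic (adj_G_of_D hD ho) hδt.symm hot
    rcases D_or_D hD hδt with hc' | hp'
    · have hEo : E.adj o δ := (hsame hD hE hdiff (fun hc => hoT hc.1)).mp ho
      have hEt : E.adj t δ := hflip hD hE hdiff hδT htT hc'
      have hvE : E.IsVStructure o δ t := ⟨hot, hEo, hEt,
        fun h => hnadj (adj_G_of_D hE h), fun h => hnadj (adj_G_of_D hE h).symm⟩
      exact D.asymm hc' ((hvs o δ t).mpr hvE).2.2.1
    · have hvD : D.IsVStructure o δ t := ⟨hot, ho, hp',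
        fun h => hnadj (adj_G_of_D hD h), fun h => hnadj (adj_G_of_D hD h).symm⟩
      exact E.asymm (hflip hD hE hdiff htT hδT hp') ((hvs o δ t).mp hvD).2.2.1
  · obtain ⟨j, hj, k, hk, hjk⟩ := Finset.one_lt_card.mp hP
    obtain ⟨hjT, hji⟩ := mem_paIn.mp hj
    obtain ⟨hkT, hki⟩ := mem_paIn.mp hk
    have hnadj : ¬ G.Adj j k :=
      no_triangle htree.IsAcyclic (adj_G_of_D hD hji) (adj_G_of_D hD hki) hjk
    have hvD : D.IsVStructure j δ k := ⟨hjk, hji, hki,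
      fun h => hnadj (adj_G_of_D hD h), fun h => hnadj (adj_G_of_D hD h).symm⟩
    exact E.asymm (hflip hD hE hdiff hjT hδT hji) ((hvs j δ k).mp hvD).2.1
  · obtain ⟨j, hj, k, hk, hjk⟩ := Finset.one_lt_card.mp hC
    obtain ⟨hjT, hij⟩ := mem_chIn.mp hj
    obtain ⟨hkT, hik⟩ := mem_chIn.mp hk
    have hnadj : ¬ G.Adj j k :=
      no_triangle htree.IsAcyclic (adj_G_of_D hD hij).symm (adj_G_of_D hD hik).symm hjk
    have hvE : E.IsVStructure j δ k := ⟨hjk, hflip hD hE hdiff hδT hjT hij,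
      hflip hD hE hdiff hδT hkT hik,
      fun h => hnadj (adj_G_of_D hE h), fun h => hnadj (adj_G_of_D hE h).symm⟩
    exact D.asymm hij ((hvs j δ k).mpr hvE).2.1

/-- The forward direction: an essential flip satisfies the local conditions. -/
lemma forward_main (htree : D.skeleton.IsTree) (hE : E.skeleton = D.skeleton)
    (hT2 : 2 ≤ Tset.card) (hconn : ((D.skeleton).induce ↑Tset).Connected)
    (hdiff : ∀ a b : Fin n, D.skeleton.Adj a b →
      (¬ (D.adj a b ↔ E.adj a b) ↔ (a ∈ Tset ∧ b ∈ Tset)))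
    (hflp : EssentialFlip D E) : LocalConds D.skeleton D E Tset := by
  classical
  intro i hiT hint
  have hTF : TF D := tf_of_tree rfl htree.IsAcyclic
  have hTFE : TF E := tf_of_tree hE htree.IsAcyclic
  have hacD : D.skeleton.IsAcyclic := htree.IsAcyclic
  have hacE : E.skeleton.IsAcyclic := by rw [hE]; exact htree.IsAcyclic
  have resolve : ∀ {a b : Fin n}, D.adj a b → a ∈ treeSpan D.skeleton (deltaSet D E) →
      b ∈ treeSpan D.skeleton (deltaSet D E) → D.Essential a b ∧ E.Essential b a := by
    intro a b hab haS hbS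
    rcases hflp.2 a b haS hbS (Or.inl hab) with h | h
    · exact h
    · exact absurd h.1.1 (fun h' => D.asymm hab h')
  refine ⟨?_, ?_, ?_⟩
  · -- Type IV
    intro hpa hch
    by_cases hO : ∃ q, D.adj q i ∧ q ∉ Tset
    · exact Or.inl hO
    right
    push_neg at hO
    intro c hc hv
    obtain ⟨hcT, hic⟩ := mem_chIn.mp hc
    obtain ⟨a, b, hvstr⟩ := hv
    have hcΔ : c ∈ deltaSet D E := delta_of_twoPar htree rfl hE hT2 hconn hdiff hcT
      ⟨a, b, hvstr.1, hvstr.2.1, hvstr.2.2.1⟩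
    have hiΔ : i ∈ deltaSet D E := by
      rw [delta_char htree rfl hE hT2 hconn hdiff]
      exact ⟨hiT, Or.inr (Or.inl hpa)⟩
    obtain ⟨-, hEci⟩ := resolve hic (mem_span_self hiΔ) (mem_span_self hcΔ)
    exact ep_of_fcd hTFE ((essential_iff_fcd hTFE hacE).mp hEci)
      (not_twoPar_E rfl hE hdiff hiT (by omega) hO)
  · -- Type V
    intro hpa hch
    by_cases hO : ∃ q, D.adj q i ∧ q ∉ Tset
    · exact Or.inl hO
    right
    push_neg at hO
    intro q hq hv
    obtain ⟨hqT, hqi⟩ := mem_paIn.mp hq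
    obtain ⟨a, b, hvstr⟩ := hv
    have hqΔ : q ∈ deltaSet D E := delta_of_twoParE htree rfl hE hT2 hconn hdiff hqT
      ⟨a, b, hvstr.1, hvstr.2.1, hvstr.2.2.1⟩
    have hiΔ : i ∈ deltaSet D E := by
      rw [delta_char htree rfl hE hT2 hconn hdiff]
      exact ⟨hiT, Or.inr (Or.inr hch)⟩
    obtain ⟨hDqi, -⟩ := resolve hqi (mem_span_self hqΔ) (mem_span_self hiΔ)
    exact ep_of_fcd hTF ((essential_iff_fcd hTF hacD).mp hDqi)
      (not_twoPar_D (by omega) hO)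
  · -- Type VI
    intro hpa hch hrq hrc
    by_cases hO : ∃ q, D.adj q i ∧ q ∉ Tset
    · exact Or.inl hO
    right
    push_neg at hO
    obtain ⟨qq, hpau⟩ := Finset.card_eq_one.mp hpa
    obtain ⟨cc, hchu⟩ := Finset.card_eq_one.mp hch
    have hqm : qq ∈ paIn D Tset i := by rw [hpau]; simp
    have hcm : cc ∈ chIn D Tset i := by rw [hchu]; simp
    obtain ⟨hqT, hqi⟩ := mem_paIn.mp hqm
    obtain ⟨hcT, hic⟩ := mem_chIn.mp hcm
    obtain ⟨d1, hd1, p1, hp1, hp1T, hp1i⟩ := reaches_to_path (hrq qq hqm)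
    obtain ⟨d2, hd2, p2, hp2, hp2T, hp2i⟩ := reaches_to_path (hrc cc hcm)
    have hqc : qq ≠ cc := fun e => D.asymm hic (e ▸ hqi)
    obtain ⟨w, hwp, hqmem, himem, hcmem⟩ := glue_path htree
      (adj_G_of_D rfl hqi).symm.symm (adj_G_of_D rfl hic) hqc p1 hp1 hp1i p2 hp2 hp2i
    have hspan : ∀ x, x ∈ w.support → x ∈ treeSpan D.skeleton (deltaSet D E) :=
      fun x hx => ⟨d1, hd1, d2, hd2, w, hwp, hx⟩
    obtain ⟨-, hEcci⟩ := resolve hic (hspan i himem) (hspan cc hcmem)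
    obtain ⟨hDqqi, -⟩ := resolve hqi (hspan qq hqmem) (hspan i himem)
    constructor
    · intro c' hc'
      have hcv : c' = cc := by rw [hchu] at hc'; simpa using hc'
      subst hcv
      exact ep_of_fcd hTFE ((essential_iff_fcd hTFE hacE).mp hEcci)
        (not_twoPar_E rfl hE hdiff hiT (by omega) hO)
    · intro q' hq'
      have hqv : q' = qq := by rw [hpau] at hq'; simpa using hq'
      subst hqv
      exact ep_of_fcd hTF ((essential_iff_fcd hTF hacD).mp hDqqi)
        (not_twoPar_D (by omega) hO)

lemma deltaSet_comm (hD : D.skeleton = G) (hE : E.skeleton = G) :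
    deltaSet E D = deltaSet D E := by
  ext i
  constructor <;> rintro ⟨S, h1, h2, h3, h4⟩
  · exact ⟨S, h1, by rw [hD, ← hE]; exact h2, h3, h4.symm⟩
  · exact ⟨S, h1, by rw [hE, ← hD]; exact h2, h3, h4.symm⟩

lemma paInE (hD : D.skeleton = G) (hE : E.skeleton = G)
    (hdiff : ∀ a b : Fin n, G.Adj a b → (¬ (D.adj a b ↔ E.adj a b) ↔ (a ∈ Tset ∧ b ∈ Tset)))
    {i : Fin n} (hi : i ∈ Tset) : paIn E Tset i = chIn D Tset i := by
  ext t
  rw [mem_paIn, mem_chIn]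
  constructor
  · rintro ⟨htT, hti⟩
    rcases eparent_cases hD hE hdiff hi hti with ⟨h1, h2⟩ | ⟨h1, h2⟩
    · exact absurd htT h2
    · exact ⟨htT, h1⟩
  · rintro ⟨htT, hit⟩
    exact ⟨htT, hflip hD hE hdiff hi htT hit⟩

lemma chInE (hD : D.skeleton = G) (hE : E.skeleton = G)
    (hdiff : ∀ a b : Fin n, G.Adj a b → (¬ (D.adj a b ↔ E.adj a b) ↔ (a ∈ Tset ∧ b ∈ Tset)))
    {i : Fin n} (hi : i ∈ Tset) : chIn E Tset i = paIn D Tset i := by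
  ext t
  rw [mem_paIn, mem_chIn]
  constructor
  · rintro ⟨htT, hit⟩
    rcases eparent_cases hD hE hdiff htT hit with ⟨h1, h2⟩ | ⟨h1, h2⟩
    · exact absurd hi h2
    · exact ⟨htT, h1⟩
  · rintro ⟨htT, hti⟩
    exact ⟨htT, hflip hD hE hdiff htT hi hti⟩

lemma outE (hD : D.skeleton = G) (hE : E.skeleton = G)
    (hdiff : ∀ a b : Fin n, G.Adj a b → (¬ (D.adj a b ↔ E.adj a b) ↔ (a ∈ Tset ∧ b ∈ Tset)))
    {i : Fin n} :
    (∃ q, E.adj q i ∧ q ∉ Tset) ↔ (∃ q, D.adj q i ∧ q ∉ Tset) := by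
  constructor
  · rintro ⟨q, h1, h2⟩
    exact ⟨q, (hsame hD hE hdiff (fun hc => h2 hc.1)).mpr h1, h2⟩
  · rintro ⟨q, h1, h2⟩
    exact ⟨q, (hsame hD hE hdiff (fun hc => h2 hc.1)).mp h1, h2⟩

lemma rhs_dual (hD : D.skeleton = G) (hE : E.skeleton = G)
    (hdiff : ∀ a b : Fin n, G.Adj a b → (¬ (D.adj a b ↔ E.adj a b) ↔ (a ∈ Tset ∧ b ∈ Tset)))
    (h : LocalConds G D E Tset) : LocalConds G E D Tset := by
  have hdcomm : deltaSet E D = deltaSet D E := deltaSet_comm hD hE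
  intro i hiT hint
  obtain ⟨hIV, hV, hVI⟩ := h i hiT hint
  refine ⟨?_, ?_, ?_⟩
  · intro h1 h2
    rw [paInE hD hE hdiff hiT] at h1
    rw [chInE hD hE hdiff hiT] at h2
    rcases hV h2 h1 with hOut | hcnd
    · exact Or.inl ((outE hD hE hdiff).mpr hOut)
    · right
      intro c hc hvs
      rw [chInE hD hE hdiff hiT] at hc
      exact hcnd c hc hvs
  · intro h1 h2
    rw [paInE hD hE hdiff hiT] at h1
    rw [chInE hD hE hdiff hiT] at h2
    rcases hIV h2 h1 with hOut | hcnd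
    · exact Or.inl ((outE hD hE hdiff).mpr hOut)
    · right
      intro q hq hvs
      rw [paInE hD hE hdiff hiT] at hq
      exact hcnd q hq hvs
  · intro h1 h2 hr1 hr2
    rw [paInE hD hE hdiff hiT] at h1
    rw [chInE hD hE hdiff hiT] at h2
    have hr1' : ∀ c ∈ chIn D Tset i, ReachesAvoiding G Tset i c (deltaSet D E) := by
      intro c hc
      have := hr1 c (by rw [paInE hD hE hdiff hiT]; exact hc)
      rwa [hdcomm] at this
    have hr2' : ∀ q ∈ paIn D Tset i, ReachesAvoiding G Tset i q (deltaSet D E) := by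
      intro q hq
      have := hr2 q (by rw [chInE hD hE hdiff hiT]; exact hq)
      rwa [hdcomm] at this
    rcases hVI h2 h1 hr2' hr1' with hOut | ⟨hc1, hc2⟩
    · exact Or.inl ((outE hD hE hdiff).mpr hOut)
    · right
      constructor
      · intro c hc
        rw [chInE hD hE hdiff hiT] at hc
        exact hc2 c hc
      · intro q hq
        rw [paInE hD hE hdiff hiT] at hq
        exact hc1 q hq

end AuxForward

/-- **Characterization of essential flips of DAGs differing on a subtree.**  Let `D`, `E` be
DAGs with common tree skeleton `G`, whose differing edges form a subtree with vertex set
`Tset`, and with `Δ(D,E) ≠ ∅`.  Then `{D, E}` is an essential flip iff every internal node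
`i` of the subtree (degree `≥ 2` in it) satisfies the local criterion of its type (types
I–III impose no condition; types IV, V, VI impose the tabulated conditions, the unique
element of `T ∩ ch_D(i)` resp. `T ∩ pa_D(i)` being quantified over the singleton). -/
theorem essentialFlip_subtree_characterization {p : ℕ} (G : SimpleGraph (Fin p))
    (htree : G.IsTree) (D E : DAG (Fin p)) (hD : D.skeleton = G) (hE : E.skeleton = G)
    (Tset : Finset (Fin p)) (hT2 : 2 ≤ Tset.card)
    (hconn : (G.induce (↑Tset : Set (Fin p))).Connected)
    (hdiff : ∀ a b : Fin p, G.Adj a b → (¬ (D.adj a b ↔ E.adj a b) ↔ (a ∈ Tset ∧ b ∈ Tset)))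
    (hdelta : (deltaSet D E).Nonempty) :
    EssentialFlip D E ↔
      ∀ i ∈ Tset, 2 ≤ (Tset.filter (fun j => G.Adj i j)).card →
        -- Type IV : `|T ∩ pa(i)| ≥ 2` and `|T ∩ ch(i)| = 1`
        (2 ≤ (paIn D Tset i).card → (chIn D Tset i).card = 1 →
          (∃ q, D.adj q i ∧ q ∉ Tset) ∨
            ∀ c ∈ chIn D Tset i,
              (∃ a b, D.IsVStructure a c b) → ∃ y, E.Essential y c) ∧
        -- Type V : `|T ∩ pa(i)| = 1` and `|T ∩ ch(i)| ≥ 2`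
        ((paIn D Tset i).card = 1 → 2 ≤ (chIn D Tset i).card →
          (∃ q, D.adj q i ∧ q ∉ Tset) ∨
            ∀ q ∈ paIn D Tset i,
              (∃ a b, E.IsVStructure a q b) → ∃ y, D.Essential y q) ∧
        -- Type VI : `|T ∩ pa(i)| = 1` and `|T ∩ ch(i)| = 1`
        ((paIn D Tset i).card = 1 → (chIn D Tset i).card = 1 →
          -- if both connected components of `T ∖ {i}` contain nodes of `Δ(D,E)` …
          (∀ q ∈ paIn D Tset i, ReachesAvoiding G Tset i q (deltaSet D E)) →
          (∀ c ∈ chIn D Tset i, ReachesAvoiding G Tset i c (deltaSet D E)) →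
          (∃ q, D.adj q i ∧ q ∉ Tset) ∨
            ((∀ c ∈ chIn D Tset i, ∃ y, E.Essential y c) ∧
             (∀ q ∈ paIn D Tset i, ∃ y, D.Essential y q))) := by

  classical
  subst hD
  show EssentialFlip D E ↔ LocalConds D.skeleton D E Tset
  have hdiffE : ∀ a b : Fin p, D.skeleton.Adj a b →
      (¬ (E.adj a b ↔ D.adj a b) ↔ (a ∈ Tset ∧ b ∈ Tset)) := by
    intro a b h
    rw [show (¬ (E.adj a b ↔ D.adj a b)) = (¬ (D.adj a b ↔ E.adj a b)) from
      propext (not_congr Iff.comm)]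
    exact hdiff a b h
  constructor
  · exact forward_main htree hE hT2 hconn hdiff
  · intro hcond
    have hΔT : deltaSet D E ⊆ ↑Tset := fun x hx =>
      ((delta_char htree rfl hE hT2 hconn hdiff x).mp hx).1
    have hdual : LocalConds D.skeleton E D Tset := rhs_dual rfl hE hdiff hcond
    have hcomm : deltaSet E D = deltaSet D E := deltaSet_comm rfl hE
    constructor
    · exact not_markovEquiv htree rfl hE hT2 hconn hdiff hdelta
    · intro a b haS hbS hadj
      have haT : a ∈ Tset := span_sub htree hconn hΔT haS
      have hbT : b ∈ Tset := span_sub htree hconn hΔT hbS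
      have hra : ReachesAvoiding D.skeleton Tset b a (deltaSet D E) :=
        span_adj_reaches htree hconn hΔT haS hadj
      have hrb : ReachesAvoiding D.skeleton Tset a b (deltaSet D E) :=
        span_adj_reaches htree hconn hΔT hbS hadj.symm
      have hra' : ReachesAvoiding D.skeleton Tset a b (deltaSet E D) := by
        rw [hcomm]; exact hrb
      have hrb' : ReachesAvoiding D.skeleton Tset b a (deltaSet E D) := by
        rw [hcomm]; exact hra
      rcases D_or_D rfl hadj with hab | hba
      · left
        have hEba : E.adj b a := hflip rfl hE hdiff haT hbT hab
        exact ⟨fcd_essential (tf_of_tree rfl htree.IsAcyclic)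
            (back_main htree rfl hE hT2 hconn hdiff hcond haT hbT hab hra hrb),
          fcd_essential (tf_of_tree hE htree.IsAcyclic)
            (back_main (D := E) (E := D) htree hE rfl hT2 hconn hdiffE hdual
              hbT haT hEba hra' hrb')⟩
      · right
        have hEab : E.adj a b := hflip rfl hE hdiff hbT haT hba
        exact ⟨fcd_essential (tf_of_tree rfl htree.IsAcyclic)
            (back_main htree rfl hE hT2 hconn hdiff hcond hbT haT hba hrb hra),
          fcd_essential (tf_of_tree hE htree.IsAcyclic)
            (back_main (D := E) (E := D) htree hE rfl hT2 hconn hdiffE hdual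
              haT hbT hEab hrb' hra')⟩
end
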